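/- arXiv:2401.05185 — 12 statements merged into one kernel-verified Lean document; each statement's English description precedes it below -/
import Mathlib

section
/- Every quasi-component of a quasi-spectral space is connected. That is, if X is a quasi-compact topological space with a basis of quasi-compact open sets such that the intersection of any two basis members is quasi-compact, then for every x ∈ X the intersection of all clopen subsets of X containing x is a connected subset of X. -/
open Set Topology

/-- Every quasi-component of a quasi-spectral space is connected. -/
theorem quasiComponent_isConnected_of_quasiSpectral
    {X : Type*} [TopologicalSpace X] [CompactSpace X]
    (B : Set (Set X)) (hB : TopologicalSpace.IsTopologicalBasis B)
    (hBc : ∀ U ∈ B, IsCompact U)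
    (hBi : ∀ U ∈ B, ∀ V ∈ B, IsCompact (U ∩ V))
    (x : X) :
    IsConnected (⋂₀ {A : Set X | IsClopen A ∧ x ∈ A}) := by
  classical
  set T := ⋂₀ {A : Set X | IsClopen A ∧ x ∈ A} with hT
  have hxT : x ∈ T := fun A hA => hA.2
  have hTclosed : IsClosed T := isClosed_sInter (fun A hA => hA.1.isClosed)
  -- any compact set disjoint from T is avoided by some clopen set containing x
  have clopen_avoid : ∀ K : Set X, IsCompact K → Disjoint K T →
      ∃ U, IsClopen U ∧ x ∈ U ∧ Disjoint U K := by
    intro K hK hKT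
    have hcover : K ⊆ ⋃ A : {A : Set X // IsClopen A ∧ x ∈ A}, (A : Set X)ᶜ := by
      intro k hk
      by_contra hcon
      simp only [mem_iUnion, mem_compl_iff, not_exists, not_not] at hcon
      exact hKT.le_bot ⟨hk, fun A hA => hcon ⟨A, hA⟩⟩
    obtain ⟨t, ht⟩ := hK.elim_finite_subcover _ (fun A => A.2.1.compl.isOpen) hcover
    refine ⟨⋂ A ∈ t, (A : Set X), ?_, ?_, ?_⟩
    · exact isClopen_biInter_finset (fun A _ => A.2.1)
    · exact mem_iInter₂.2 fun A _ => A.2.2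
    · rw [disjoint_left]
      intro k hkU hkK
      obtain ⟨A, hAt, hAk⟩ := mem_iUnion₂.1 (ht hkK)
      exact hAk (mem_iInter₂.1 hkU A hAt)
  -- separate a compact set from a disjoint closed set by a finite union of basis elements
  have sep : ∀ C D : Set X, IsCompact C → IsClosed D → Disjoint C D →
      ∃ s : Finset (Set X), ↑s ⊆ B ∧ C ⊆ ⋃ V ∈ s, V ∧ Disjoint (⋃ V ∈ s, V) D := by
    intro C D hC hD hCD
    have hmem : ∀ y : C, ∃ V, V ∈ B ∧ (y : X) ∈ V ∧ Disjoint V D := by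
      intro y
      have hyD : (y : X) ∈ Dᶜ := fun h => hCD.le_bot ⟨y.2, h⟩
      obtain ⟨V, hVB, hyV, hVD⟩ := hB.exists_subset_of_mem_open hyD hD.isOpen_compl
      exact ⟨V, hVB, hyV, disjoint_left.2 fun z hz hz' => hVD hz hz'⟩
    choose V hVB hVy hVD using hmem
    have hcov : C ⊆ ⋃ y : C, V y := fun c hc => mem_iUnion.2 ⟨⟨c, hc⟩, hVy ⟨c, hc⟩⟩
    obtain ⟨t, ht⟩ := hC.elim_finite_subcover _ (fun y => hB.isOpen (hVB y)) hcov
    refine ⟨t.image V, ?_, ?_, ?_⟩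
    · intro W hW
      simp only [Finset.coe_image, mem_image] at hW
      obtain ⟨y, _, rfl⟩ := hW
      exact hVB y
    · intro c hc
      obtain ⟨y, hyt, hcy⟩ := mem_iUnion₂.1 (ht hc)
      exact mem_iUnion₂.2 ⟨V y, Finset.mem_image_of_mem V hyt, hcy⟩
    · rw [disjoint_left]
      intro z hz hzD
      obtain ⟨W, hWt, hzW⟩ := mem_iUnion₂.1 hz
      obtain ⟨y, _, rfl⟩ := Finset.mem_image.1 hWt
      exact (hVD y).le_bot ⟨hzW, hzD⟩
  -- intersection of two finite unions of basis elements is compact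
  have interCompact : ∀ s s' : Finset (Set X), ↑s ⊆ B → ↑s' ⊆ B →
      IsCompact ((⋃ V ∈ s, V) ∩ ⋃ V ∈ s', V) := by
    intro s s' hs hs'
    have heq : (⋃ V ∈ s, V) ∩ (⋃ V ∈ s', V) = ⋃ V ∈ s, ⋃ V' ∈ s', V ∩ V' := by
      simp_rw [iUnion_inter, inter_iUnion]
    rw [heq]
    exact s.finite_toSet.isCompact_biUnion fun V hV =>
      s'.finite_toSet.isCompact_biUnion fun V' hV' => hBi V (hs hV) V' (hs' hV')
  -- key contradiction
  have key : ∀ C D : Set X, IsClosed C → IsClosed D → Disjoint C D → C ∪ D = T →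
      x ∈ C → D.Nonempty → False := by
    rintro C D hCc hDc hCD hCDT hxC ⟨y, hy⟩
    obtain ⟨s, hsB, hCs, hsD⟩ := sep C D hCc.isCompact hDc hCD
    obtain ⟨s', hs'B, hDs', hs'C⟩ := sep D C hDc.isCompact hCc hCD.symm
    set W := ⋃ V ∈ s, V with hW
    set W' := ⋃ V ∈ s', V with hW'
    have hWopen : IsOpen W := isOpen_biUnion fun V hV => hB.isOpen (hsB hV)
    have hW'open : IsOpen W' := isOpen_biUnion fun V hV => hB.isOpen (hs'B hV)
    have hTWW' : T ⊆ W ∪ W' := by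
      rw [← hCDT]; exact union_subset_union hCs hDs'
    have hK0 : IsCompact (W ∪ W')ᶜ := (hWopen.union hW'open).isClosed_compl.isCompact
    have hK0T : Disjoint (W ∪ W')ᶜ T :=
      disjoint_left.2 fun z hz hzT => hz (hTWW' hzT)
    obtain ⟨U, hU, hxU, hUK0⟩ := clopen_avoid _ hK0 hK0T
    have hUWW' : U ⊆ W ∪ W' := fun z hz => by
      by_contra h
      exact hUK0.le_bot ⟨hz, h⟩
    have hWW'T : Disjoint (W ∩ W') T := by
      rw [disjoint_left]
      rintro z ⟨hzW, hzW'⟩ hzT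
      rw [← hCDT] at hzT
      rcases hzT with h | h
      · exact hs'C.le_bot ⟨hzW', h⟩
      · exact hsD.le_bot ⟨hzW, h⟩
    obtain ⟨U₂, hU₂, hxU₂, hU₂WW'⟩ := clopen_avoid _ (interCompact s s' hsB hs'B) hWW'T
    set U' := U ∩ U₂ with hU'def
    have hUWW'' : U' ⊆ W ∪ W' := fun z hz => hUWW' hz.1
    have hE : U' ∩ W = U' ∩ W'ᶜ := by
      ext z
      constructor
      · rintro ⟨hzU, hzW⟩
        exact ⟨hzU, fun hzW' => hU₂WW'.le_bot ⟨hzU.2, hzW, hzW'⟩⟩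
      · rintro ⟨hzU, hzW'⟩
        rcases hUWW'' hzU with h | h
        · exact ⟨hzU, h⟩
        · exact absurd h hzW'
    have hEclopen : IsClopen (U' ∩ W) := by
      constructor
      · rw [hE]
        exact (hU.isClosed.inter hU₂.isClosed).inter hW'open.isClosed_compl
      · exact (hU.isOpen.inter hU₂.isOpen).inter hWopen
    have hxE : x ∈ U' ∩ W := ⟨⟨hxU, hxU₂⟩, hCs hxC⟩
    have hTE : T ⊆ U' ∩ W := sInter_subset_of_mem ⟨hEclopen, hxE⟩
    have hyT : y ∈ T := by rw [← hCDT]; exact Or.inr hy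
    exact hsD.le_bot ⟨(hTE hyT).2, hy⟩
  constructor
  · exact ⟨x, hxT⟩
  · rw [isPreconnected_iff_subset_of_fully_disjoint_closed hTclosed]
    intro u v hu hv hTuv huv
    by_contra hcon
    push_neg at hcon
    obtain ⟨hnu, hnv⟩ := hcon
    have h1 : (T ∩ u) ∪ (T ∩ v) = T := by
      rw [← inter_union_distrib_left]
      exact inter_eq_left.2 hTuv
    have hdis : Disjoint (T ∩ u) (T ∩ v) := huv.mono inter_subset_right inter_subset_right
    have hnev : (T ∩ v).Nonempty := by
      obtain ⟨z, hzT, hzu⟩ := not_subset.1 hnu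
      exact ⟨z, hzT, (hTuv hzT).resolve_left hzu⟩
    have hneu : (T ∩ u).Nonempty := by
      obtain ⟨z, hzT, hzv⟩ := not_subset.1 hnv
      exact ⟨z, hzT, (hTuv hzT).resolve_right hzv⟩
    rcases hTuv hxT with hxu | hxv
    · exact key (T ∩ u) (T ∩ v) (hTclosed.inter hu) (hTclosed.inter hv) hdis h1 ⟨hxT, hxu⟩ hnev
    · exact key (T ∩ v) (T ∩ u) (hTclosed.inter hv) (hTclosed.inter hu) hdis.symm
        (by rw [union_comm]; exact h1) ⟨hxT, hxv⟩ hneu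
end

section
/- Every quasi-component of a spectral space is connected. -/
open Set TopologicalSpace Topology

namespace SpectralQC

variable {X : Type*} [TopologicalSpace X] {B : Set (Set X)}

omit [TopologicalSpace X] in
lemma isClosed_biUnion' (t : TopologicalSpace X) {ι : Type*} (s : Set ι) (hfin : s.Finite)
    (f : ι → Set X) (h : ∀ i ∈ s, IsClosed[t] (f i)) : IsClosed[t] (⋃ i ∈ s, f i) := by
  letI := t; exact hfin.isClosed_biUnion h

omit [TopologicalSpace X] in
lemma isClosed_inter' (t : TopologicalSpace X) {s s' : Set X} (h1 : IsClosed[t] s)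
    (h2 : IsClosed[t] s') : IsClosed[t] (s ∩ s') := by
  letI := t; exact h1.inter h2

omit [TopologicalSpace X] in
lemma isClosed_compl' (t : TopologicalSpace X) {s : Set X} (h : IsOpen[t] s) :
    IsClosed[t] sᶜ := by
  letI := t; exact h.isClosed_compl

omit [TopologicalSpace X] in
lemma fip' (t : TopologicalSpace X) (hcs : @CompactSpace X t) {ι : Type*} (K : Set X)
    (hK : IsClosed[t] K) (f : ι → Set X) (hf : ∀ i, IsClosed[t] (f i))
    (he : K ∩ ⋂ i, f i = ∅) : ∃ u : Finset ι, K ∩ ⋂ i ∈ u, f i = ∅ := by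
  letI := t
  exact hK.isCompact.elim_finite_subfamily_closed f hf he

/-- The patch (constructible) topology associated to a basis `B`. -/
def patchTop (B : Set (Set X)) : TopologicalSpace X :=
  .generateFrom (B ∪ compl '' B)

lemma patch_le (hB : IsTopologicalBasis B) : patchTop B ≤ ‹TopologicalSpace X› := by
  rw [hB.eq_generateFrom]
  exact TopologicalSpace.generateFrom_anti subset_union_left

lemma patch_isOpen (hB : IsTopologicalBasis B) {U : Set X} (hU : IsOpen U) :
    IsOpen[patchTop B] U := hU.mono (patch_le hB)

lemma patch_isClosed (hB : IsTopologicalBasis B) {C : Set X} (hC : IsClosed C) :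
    IsClosed[patchTop B] C := hC.mono (patch_le hB)

lemma patch_isClosed_of_mem {U : Set X} (hU : U ∈ B) : IsClosed[patchTop B] U := by
  rw [← @isOpen_compl_iff X U (patchTop B)]
  exact TopologicalSpace.isOpen_generateFrom_of_mem (Or.inr ⟨U, hU, rfl⟩)

/-- finite intersections of basis elements are basis elements -/
lemma sInter_mem_basis (hBi : ∀ U ∈ B, ∀ V ∈ B, U ∩ V ∈ B) (s : Finset (Set X))
    (hne : s.Nonempty) (hs : ↑s ⊆ B) : ⋂₀ ↑s ∈ B := by
  classical
  induction hne using Finset.Nonempty.cons_induction with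
  | singleton a => simpa using hs (Finset.mem_singleton_self a)
  | cons a s ha hne ih =>
    rw [Finset.cons_eq_insert, Finset.coe_insert, sInter_insert]
    refine hBi a (hs (by simp)) _ (ih fun U hU => hs (by simp [hU]))

/-- `U` is a finite union of basis elements (hence a quasi-compact open). -/
def IsQCO (B : Set (Set X)) (U : Set X) : Prop :=
  ∃ s : Finset (Set X), ↑s ⊆ B ∧ U = ⋃₀ ↑s

lemma IsQCO.isOpen (hB : IsTopologicalBasis B) {U : Set X} (h : IsQCO B U) : IsOpen U := by
  obtain ⟨s, hs, rfl⟩ := h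
  exact isOpen_sUnion fun V hV => hB.isOpen (hs hV)

lemma IsQCO.patch_isClosed {U : Set X} (h : IsQCO B U) : IsClosed[patchTop B] U := by
  obtain ⟨s, hs, rfl⟩ := h
  rw [sUnion_eq_biUnion]
  exact isClosed_biUnion' (patchTop B) ↑s s.finite_toSet _
    fun V (hV : V ∈ (s : Set (Set X))) => patch_isClosed_of_mem (hs hV)

lemma IsQCO.inter (hBi : ∀ U ∈ B, ∀ V ∈ B, U ∩ V ∈ B) {U V : Set X}
    (hU : IsQCO B U) (hV : IsQCO B V) : IsQCO B (U ∩ V) := by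
  classical
  obtain ⟨s, hs, rfl⟩ := hU
  obtain ⟨t, ht, rfl⟩ := hV
  refine ⟨(s ×ˢ t).image fun p => p.1 ∩ p.2, ?_, ?_⟩
  · intro W hW
    simp only [Finset.coe_image, Finset.coe_product, mem_image, mem_prod] at hW
    obtain ⟨⟨a, b⟩, ⟨has, hbt⟩, rfl⟩ := hW
    exact hBi a (hs has) b (ht hbt)
  · ext p
    simp only [mem_inter_iff, mem_sUnion, Finset.coe_image, Finset.coe_product,
      mem_image, mem_prod, Finset.mem_coe]
    constructor
    · rintro ⟨⟨a, ha, hpa⟩, ⟨b, hb, hpb⟩⟩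
      exact ⟨a ∩ b, ⟨⟨a, b⟩, ⟨ha, hb⟩, rfl⟩, hpa, hpb⟩
    · rintro ⟨W, ⟨⟨a, b⟩, ⟨ha, hb⟩, rfl⟩, hpa, hpb⟩
      exact ⟨⟨a, Finset.mem_coe.2 ha, hpa⟩, ⟨b, Finset.mem_coe.2 hb, hpb⟩⟩

/-- every compact set contained in an open set is contained in a QCO inside it. -/
lemma exists_qco_between (hB : IsTopologicalBasis B) {A V : Set X} (hA : IsCompact A)
    (hV : IsOpen V) (hAV : A ⊆ V) : ∃ U, IsQCO B U ∧ A ⊆ U ∧ U ⊆ V := by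
  classical
  choose! W hWB hWmem hWsub using fun p (hp : p ∈ A) =>
    hB.exists_subset_of_mem_open (hAV hp) hV
  obtain ⟨u, hu⟩ := hA.elim_finite_subcover (fun p : A => W p.1)
    (fun p => hB.isOpen (hWB p.1 p.2)) (fun p hp => mem_iUnion.2 ⟨⟨p, hp⟩, hWmem p hp⟩)
  refine ⟨⋃ p ∈ u, W p.1, ⟨u.image fun p => W p.1, ?_, ?_⟩, hu, ?_⟩
  · intro U hU
    simp only [Finset.coe_image, mem_image, Finset.mem_coe] at hU
    obtain ⟨p, -, rfl⟩ := hU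
    exact hWB p.1 p.2
  · rw [Finset.coe_image, sUnion_image]; simp
  · exact iUnion₂_subset fun p _ => hWsub p.1 p.2

lemma IsQCO.univ [CompactSpace X] (hB : IsTopologicalBasis B) : IsQCO B (univ : Set X) := by
  obtain ⟨U, hU, hsub, hsub'⟩ := exists_qco_between hB isCompact_univ isOpen_univ
    (subset_refl _)
  rwa [eq_univ_of_univ_subset hsub] at hU

lemma IsQCO.biInter [CompactSpace X] (hB : IsTopologicalBasis B)
    (hBi : ∀ U ∈ B, ∀ V ∈ B, U ∩ V ∈ B) {ι : Type*} (u : Finset ι) (g : ι → Set X)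
    (hg : ∀ i ∈ u, IsQCO B (g i)) : IsQCO B (⋂ i ∈ u, g i) := by
  classical
  induction u using Finset.induction_on with
  | empty => simpa using IsQCO.univ hB
  | insert a s ha ih =>
    rw [Finset.set_biInter_insert]
    exact (hg _ (Finset.mem_insert_self _ _)).inter hBi
      (ih fun i hi => hg i (Finset.mem_insert_of_mem hi))

theorem exists_patch_generic [CompactSpace X] [QuasiSober X] (hB : IsTopologicalBasis B)
    (hBc : ∀ U ∈ B, IsCompact U) (hBi : ∀ U ∈ B, ∀ V ∈ B, U ∩ V ∈ B)
    (f : Ultrafilter X) : ∃ ξ : X, ∀ U ∈ B, (ξ ∈ U ↔ U ∈ f) := by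
  classical
  set T : Set (Set X) :=
    {Z | ∃ s t : Finset (Set X), ↑s ⊆ {U | U ∈ B ∧ U ∈ f} ∧ ↑t ⊆ {U | U ∈ B ∧ U ∉ f} ∧
      Z = ⋂₀ ↑s ∩ (⋃₀ ↑t)ᶜ} with hTdef
  have hTf : ∀ Z ∈ T, Z ∈ f := by
    rintro Z ⟨s, t, hs, ht, rfl⟩
    refine Filter.inter_mem ((Filter.sInter_mem s.finite_toSet).2 fun U hU => (hs hU).2) ?_
    rw [compl_sUnion]
    refine (Filter.sInter_mem ((t.finite_toSet).image _)).2 ?_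
    rintro V ⟨U, hU, rfl⟩
    exact Ultrafilter.compl_mem_iff_notMem.2 (ht hU).2
  have hTne : ∀ Z ∈ T, Z.Nonempty := fun Z hZ => Ultrafilter.nonempty_of_mem (hTf Z hZ)
  have hTc : ∀ Z ∈ T, IsCompact Z := by
    rintro Z ⟨s, t, hs, ht, rfl⟩
    have h2 : IsClosed (⋃₀ (t : Set (Set X)))ᶜ :=
      (isOpen_sUnion fun V hV => hB.isOpen (ht hV).1).isClosed_compl
    rcases s.eq_empty_or_nonempty with rfl | hne
    · simpa using h2.isCompact
    · exact (hBc _ (sInter_mem_basis hBi s hne fun U hU => (hs hU).1)).inter_right h2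
  have hTinter : ∀ Z₁ ∈ T, ∀ Z₂ ∈ T, Z₁ ∩ Z₂ ∈ T := by
    rintro Z₁ ⟨s₁, t₁, hs₁, ht₁, rfl⟩ Z₂ ⟨s₂, t₂, hs₂, ht₂, rfl⟩
    refine ⟨s₁ ∪ s₂, t₁ ∪ t₂, ?_, ?_, ?_⟩
    · rw [Finset.coe_union]; exact union_subset hs₁ hs₂
    · rw [Finset.coe_union]; exact union_subset ht₁ ht₂
    · rw [Finset.coe_union, Finset.coe_union, sInter_union, sUnion_union]
      ext p; simp only [mem_inter_iff, mem_compl_iff, mem_union]; tauto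
  have hTuniv : univ ∈ T := ⟨∅, ∅, by simp, by simp, by simp⟩
  set C : Set (Set X) := {C | IsClosed C ∧ ∀ Z ∈ T, (C ∩ Z).Nonempty} with hCdef
  have hzorn : ∀ c ⊆ C, IsChain (· ⊆ ·) c → c.Nonempty → ∃ lb ∈ C, ∀ s ∈ c, lb ⊆ s := by
    intro c hc hchain hcne
    refine ⟨⋂₀ c, ⟨isClosed_sInter fun D hD => (hc hD).1, ?_⟩, fun s hs => sInter_subset_of_mem hs⟩
    intro Z hZ
    by_contra hcon
    rw [Set.not_nonempty_iff_eq_empty] at hcon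
    have hcover : Z ⊆ ⋃ D : c, (D : Set X)ᶜ := by
      intro p hp
      by_contra hp'
      simp only [mem_iUnion, mem_compl_iff, not_exists, not_not] at hp'
      exact absurd hcon (Set.nonempty_iff_ne_empty.1
        ⟨p, mem_sInter.2 fun D hD => hp' ⟨D, hD⟩, hp⟩)
    obtain ⟨u, hu⟩ := (hTc Z hZ).elim_finite_subcover (fun D : c => (D : Set X)ᶜ)
      (fun D => (hc D.2).1.isOpen_compl) hcover
    -- find a minimal element of the finite subchain
    have hmin : ∀ (v : Finset c), v.Nonempty → ∃ D ∈ v, ∀ D' ∈ v, (D : Set X) ⊆ D' := by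
      intro v hv
      induction hv using Finset.Nonempty.cons_induction with
      | singleton a => exact ⟨a, by simp, fun D' hD' => by simp at hD'; simp [hD']⟩
      | cons a w ha hw ih =>
        obtain ⟨D, hDv, hDmin⟩ := ih
        rcases eq_or_ne (a : Set X) (D : Set X) with he | hne
        · exact ⟨D, Finset.mem_cons_of_mem hDv, fun D' hD' => by
            rcases Finset.mem_cons.1 hD' with rfl | hD'
            · rw [he]
            · exact hDmin D' hD'⟩
        rcases hchain.total a.2 D.2 with h1 | h1
        · exact ⟨a, Finset.mem_cons_self a _, fun D' hD' => by
            rcases Finset.mem_cons.1 hD' with rfl | hD'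
            · exact subset_rfl
            · exact h1.trans (hDmin D' hD')⟩
        · exact ⟨D, Finset.mem_cons_of_mem hDv, fun D' hD' => by
            rcases Finset.mem_cons.1 hD' with rfl | hD'
            · exact h1
            · exact hDmin D' hD'⟩
    rcases u.eq_empty_or_nonempty with rfl | hune
    · obtain ⟨p, hp⟩ := hTne Z hZ
      simpa using hu hp
    obtain ⟨D, hDu, hDmin⟩ := hmin u hune
    have : Z ∩ (D : Set X) = ∅ := by
      rw [Set.eq_empty_iff_forall_notMem]
      rintro p ⟨hpZ, hpD⟩
      obtain ⟨i, hiu, hpi⟩ := mem_iUnion₂.1 (hu hpZ)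
      exact hpi (hDmin i hiu hpD)
    obtain ⟨p, hp⟩ := (hc D.2).2 Z hZ
    exact absurd this (Set.nonempty_iff_ne_empty.1 ⟨p, hp.2, hp.1⟩)
  obtain ⟨m, -, hm⟩ := zorn_superset_nonempty C hzorn univ
    ⟨isClosed_univ, fun Z hZ => by simpa using hTne Z hZ⟩
  have hmC : m ∈ C := hm.1
  have hmin : ∀ D ∈ C, D ⊆ m → m ⊆ D := fun D hD hsub => hm.2 hD hsub
  -- m is irreducible
  have hkey : ∀ w : Set X, IsOpen w → (m ∩ w).Nonempty → ∃ Z ∈ T, m ∩ Z ⊆ w := by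
    intro w hw ⟨a, ham, haw⟩
    by_contra h
    push_neg at h
    have : m \ w ∈ C := by
      refine ⟨hmC.1.sdiff hw, fun Z hZ => ?_⟩
      obtain ⟨p, hpZ, hpw⟩ := not_subset.1 (h Z hZ)
      exact ⟨p, ⟨hpZ.1, hpw⟩, hpZ.2⟩
    exact (hmin _ this diff_subset ham).2 haw
  have hirr : IsIrreducible m := by
    constructor
    · obtain ⟨p, hp⟩ := hmC.2 univ hTuniv
      exact ⟨p, hp.1⟩
    · intro u v hu hv hmu hmv
      obtain ⟨Z₁, hZ₁, hZ₁u⟩ := hkey u hu hmu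
      obtain ⟨Z₂, hZ₂, hZ₂v⟩ := hkey v hv hmv
      obtain ⟨p, hpm, hpZ⟩ := hmC.2 _ (hTinter Z₁ hZ₁ Z₂ hZ₂)
      exact ⟨p, hpm, hZ₁u ⟨hpm, hpZ.1⟩, hZ₂v ⟨hpm, hpZ.2⟩⟩
  obtain ⟨ξ, hξ⟩ := QuasiSober.sober hirr hmC.1
  have hξm : ξ ∈ m := hξ ▸ subset_closure rfl
  refine ⟨ξ, fun U hU => ⟨?_, ?_⟩⟩
  · -- ξ ∈ U → U ∈ f
    intro hξU
    by_contra hUf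
    have hmU : m \ U ∈ C := by
      refine ⟨hmC.1.sdiff (hB.isOpen hU), ?_⟩
      rintro Z ⟨s, t, hs, ht, rfl⟩
      have hZU : (⋂₀ ↑s ∩ (⋃₀ ↑(insert U t))ᶜ) ∈ T := by
        refine ⟨s, insert U t, hs, ?_, rfl⟩
        rw [Finset.coe_insert]
        exact insert_subset_iff.2 ⟨⟨hU, hUf⟩, ht⟩
      obtain ⟨p, hpm, hpZ⟩ := hmC.2 _ hZU
      rw [Finset.coe_insert, sUnion_insert, compl_union] at hpZ
      exact ⟨p, ⟨hpm, hpZ.2.1⟩, hpZ.1, hpZ.2.2⟩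
    have := hmin _ hmU diff_subset hξm
    exact this.2 hξU
  · -- U ∈ f → ξ ∈ U
    intro hUf
    have hUT : U ∈ T := by
      refine ⟨{U}, ∅, by simp [hU, hUf], by simp, by simp⟩
    obtain ⟨p, hpm, hpU⟩ := hmC.2 U hUT
    rw [← hξ] at hpm
    obtain ⟨q, hq, hq'⟩ := mem_closure_iff.1 hpm U (hB.isOpen hU) hpU
    rwa [← hq']

theorem patch_compactSpace [CompactSpace X] [QuasiSober X] (hB : IsTopologicalBasis B)
    (hBc : ∀ U ∈ B, IsCompact U) (hBi : ∀ U ∈ B, ∀ V ∈ B, U ∩ V ∈ B) :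
    @CompactSpace X (patchTop B) := by
  have hcompact : @IsCompact X (patchTop B) univ := by
    rw [@isCompact_iff_ultrafilter_le_nhds X (patchTop B)]
    intro f _
    obtain ⟨ξ, hξ⟩ := exists_patch_generic hB hBc hBi f
    refine ⟨ξ, mem_univ _, ?_⟩
    show (f : Filter X) ≤ @nhds X (TopologicalSpace.generateFrom (B ∪ compl '' B)) ξ
    rw [TopologicalSpace.nhds_generateFrom]
    refine le_iInf₂ fun s hs => ?_
    obtain ⟨hξs, hsg⟩ := hs
    rcases hsg with hsB | ⟨U, hU, rfl⟩
    · exact Filter.le_principal_iff.2 ((hξ s hsB).1 hξs)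
    · exact Filter.le_principal_iff.2
        (Ultrafilter.compl_mem_iff_notMem.2 fun hUf => hξs ((hξ U hU).2 hUf))
  exact @CompactSpace.mk X (patchTop B) hcompact

theorem key [CompactSpace X] [QuasiSober X] (hB : IsTopologicalBasis B)
    (hBc : ∀ U ∈ B, IsCompact U) (hBi : ∀ U ∈ B, ∀ V ∈ B, U ∩ V ∈ B) (x : X)
    (A C : Set X) (hA : IsClosed A) (hC : IsClosed C) (hdisj : A ∩ C = ∅)
    (hunion : A ∪ C = ⋂₀ {Z : Set X | IsClopen Z ∧ x ∈ Z}) (hxA : x ∈ A)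
    (hCne : C.Nonempty) : False := by
  classical
  set Q := ⋂₀ {Z : Set X | IsClopen Z ∧ x ∈ Z} with hQdef
  have hQclosed : IsClosed Q := isClosed_sInter fun Z hZ => hZ.1.isClosed
  have hpc : @CompactSpace X (patchTop B) := patch_compactSpace hB hBc hBi
  set FA := {U | IsQCO B U ∧ A ⊆ U} with hFAdef
  set FC := {U | IsQCO B U ∧ C ⊆ U} with hFCdef
  have hgenmem : ∀ S : Set X, IsClosed S → ∀ y, y ∈ ⋂₀ {U | IsQCO B U ∧ S ⊆ U} →
      (closure {y} ∩ S).Nonempty := by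
    intro S hS y hy
    by_contra h
    rw [not_nonempty_iff_eq_empty] at h
    have hsub : S ⊆ (closure {y})ᶜ := fun p hp hp' =>
      eq_empty_iff_forall_notMem.1 h p ⟨hp', hp⟩
    obtain ⟨U, hU, hSU, hUsub⟩ := exists_qco_between hB hS.isCompact
      isClosed_closure.isOpen_compl hsub
    exact hUsub (mem_sInter.1 hy U ⟨hU, hSU⟩) (subset_closure rfl)
  have hgen : ⋂₀ FA ∩ ⋂₀ FC = ∅ := by
    rw [eq_empty_iff_forall_notMem]
    rintro y ⟨hyA, hyC⟩
    obtain ⟨a, hacl, haA⟩ := hgenmem A hA y hyA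
    obtain ⟨c, hccl, hcC⟩ := hgenmem C hC y hyC
    have hyQ : y ∈ Q := by
      refine mem_sInter.2 fun Z hZ => ?_
      have haQ : a ∈ Q := hunion ▸ Or.inl haA
      have haZ : a ∈ Z := mem_sInter.1 haQ Z hZ
      obtain ⟨q, hqZ, hqy⟩ := mem_closure_iff.1 hacl Z hZ.1.isOpen haZ
      rwa [← hqy]
    have hclsub : closure {y} ⊆ Q := closure_minimal (singleton_subset_iff.2 hyQ) hQclosed
    have hi : IsIrreducible (closure {y} : Set X) := isIrreducible_singleton.closure
    obtain ⟨z, hzcl, hzA, hzC⟩ := hi.2 Aᶜ Cᶜ hA.isOpen_compl hC.isOpen_compl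
      ⟨c, hccl, fun hcA => eq_empty_iff_forall_notMem.1 hdisj c ⟨hcA, hcC⟩⟩
      ⟨a, hacl, fun haC => eq_empty_iff_forall_notMem.1 hdisj a ⟨haA, haC⟩⟩
    have : z ∈ A ∪ C := by rw [hunion]; exact hclsub hzcl
    rcases this with h | h
    · exact hzA h
    · exact hzC h
  -- step (i): find a quasi-compact open W ⊇ A with W ∩ ⋂₀ FC = ∅
  have hW : ∃ W, IsQCO B W ∧ A ⊆ W ∧ W ∩ ⋂₀ FC = ∅ := by
    have hempty : (univ : Set X) ∩ ⋂ i : ↥(FA ∪ FC), (i : Set X) = ∅ := by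
      rw [univ_inter, ← sInter_eq_iInter, sInter_union]; exact hgen
    obtain ⟨u, hu⟩ := fip' (patchTop B) hpc univ (@isClosed_univ X (patchTop B))
      (fun i : ↥(FA ∪ FC) => (i : Set X))
      (fun i => by rcases i.2 with h | h <;> exact h.1.patch_isClosed) hempty
    rw [univ_inter] at hu
    set uA := u.filter (fun i : ↥(FA ∪ FC) => (i : Set X) ∈ FA) with huA
    refine ⟨⋂ i ∈ uA, (i : Set X), ?_, ?_, ?_⟩
    · exact IsQCO.biInter hB hBi uA _ fun i hi => ((Finset.mem_filter.1 hi).2).1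
    · exact fun p hp => mem_iInter₂.2 fun i hi => ((Finset.mem_filter.1 hi).2).2 hp
    · rw [eq_empty_iff_forall_notMem]
      rintro p ⟨hpW, hpC⟩
      have hmem : p ∈ ⋂ i ∈ u, (i : Set X) := by
        refine mem_iInter₂.2 fun i hi => ?_
        by_cases hFA' : (i : Set X) ∈ FA
        · exact mem_iInter₂.1 hpW i (Finset.mem_filter.2 ⟨hi, hFA'⟩)
        · exact mem_sInter.1 hpC _ (i.2.resolve_left hFA')
      exact eq_empty_iff_forall_notMem.1 hu p hmem
  obtain ⟨W, hWq, hAW, hWFC⟩ := hW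
  have hWopen : IsOpen W := hWq.isOpen hB
  -- step (ii): Q avoids the boundary of W
  have hD : Q ∩ (closure W \ W) = ∅ := by
    rw [eq_empty_iff_forall_notMem]
    rintro q ⟨hqQ, hqcl, hqW⟩
    have hne : (W ∩ ⋂ i : {U : Set X // U ∈ B ∧ q ∈ U}, (i : Set X)).Nonempty := by
      by_contra h
      rw [not_nonempty_iff_eq_empty] at h
      obtain ⟨u, hu⟩ := fip' (patchTop B) hpc W hWq.patch_isClosed
        (fun i : {U : Set X // U ∈ B ∧ q ∈ U} => (i : Set X))
        (fun i => patch_isClosed_of_mem i.2.1) h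
      have hqV : q ∈ ⋂ i ∈ u, (i : Set X) := mem_iInter₂.2 fun i _ => i.2.2
      have hVopen : IsOpen (⋂ i ∈ u, (i : Set X)) :=
        isOpen_biInter_finset fun i _ => hB.isOpen i.2.1
      obtain ⟨p, hp1, hp2⟩ := mem_closure_iff.1 hqcl _ hVopen hqV
      exact eq_empty_iff_forall_notMem.1 hu p ⟨hp2, hp1⟩
    obtain ⟨w, hwW, hwU⟩ := hne
    have hqw : q ∈ closure {w} := by
      rw [mem_closure_iff]
      intro o ho hqo
      obtain ⟨U, hUB, hqU, hUo⟩ := hB.exists_subset_of_mem_open hqo ho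
      exact ⟨w, hUo (mem_iInter.1 hwU ⟨U, hUB, hqU⟩), rfl⟩
    have hqC : q ∈ C := by
      have : q ∈ A ∪ C := by rw [hunion]; exact hqQ
      rcases this with h | h
      · exact absurd (hAW h) hqW
      · exact h
    have hwFC : w ∈ ⋂₀ FC := by
      refine mem_sInter.2 fun V hV => ?_
      obtain ⟨p, hp1, hp2⟩ := mem_closure_iff.1 hqw V (hV.1.isOpen hB) (hV.2 hqC)
      rwa [← hp2]
    exact eq_empty_iff_forall_notMem.1 hWFC w ⟨hwW, hwFC⟩
  -- step (iii): find a clopen Z ∋ x avoiding the boundary of W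
  have hZex : ∃ Z, IsClopen Z ∧ x ∈ Z ∧ Z ∩ (closure W \ W) = ∅ := by
    have hDpc : IsClosed[patchTop B] (closure W \ W) := by
      rw [diff_eq]
      exact isClosed_inter' _ (patch_isClosed hB isClosed_closure)
        (isClosed_compl' _ (patch_isOpen hB hWopen))
    have hempty : (closure W \ W) ∩
        ⋂ i : ↥{Z : Set X | IsClopen Z ∧ x ∈ Z}, (i : Set X) = ∅ := by
      rw [← sInter_eq_iInter, inter_comm]
      exact hD
    obtain ⟨u, hu⟩ := fip' (patchTop B) hpc _ hDpc
      (fun i : ↥{Z : Set X | IsClopen Z ∧ x ∈ Z} => (i : Set X))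
      (fun i => patch_isClosed hB i.2.1.isClosed) hempty
    refine ⟨⋂ i ∈ u, (i : Set X), isClopen_biInter_finset fun i _ => i.2.1,
      mem_iInter₂.2 fun i _ => i.2.2, by rw [inter_comm]; exact hu⟩
  obtain ⟨Z, hZclopen, hxZ, hZD⟩ := hZex
  have hZWclopen : IsClopen (Z ∩ W) := by
    refine ⟨?_, hZclopen.isOpen.inter hWopen⟩
    apply isClosed_of_closure_subset
    intro p hp
    have hpZ : p ∈ Z := hZclopen.isClosed.closure_subset (closure_mono inter_subset_left hp)
    have hpclW : p ∈ closure W := closure_mono inter_subset_right hp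
    have hpW : p ∈ W := by
      by_contra h
      exact eq_empty_iff_forall_notMem.1 hZD p ⟨hpZ, hpclW, h⟩
    exact ⟨hpZ, hpW⟩
  have hQsub : Q ⊆ Z ∩ W := sInter_subset_of_mem ⟨hZWclopen, hxZ, hAW hxA⟩
  obtain ⟨b, hb⟩ := hCne
  have hbQ : b ∈ Q := hunion ▸ Or.inr hb
  have hbFC : b ∈ ⋂₀ FC := mem_sInter.2 fun V hV => hV.2 hb
  exact eq_empty_iff_forall_notMem.1 hWFC b ⟨(hQsub hbQ).2, hbFC⟩

end SpectralQC

/-- Every quasi-component of a spectral space is connected. A spectral space is a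
quasi-compact sober topological space with a basis of quasi-compact opens closed under
pairwise intersections. -/
theorem quasiComponent_isConnected_of_spectral
    {X : Type*} [TopologicalSpace X] [CompactSpace X] [QuasiSober X] [T0Space X]
    (B : Set (Set X)) (hB : TopologicalSpace.IsTopologicalBasis B)
    (hBc : ∀ U ∈ B, IsCompact U)
    (hBi : ∀ U ∈ B, ∀ V ∈ B, U ∩ V ∈ B)
    (x : X) :
    IsConnected (⋂₀ {A : Set X | IsClopen A ∧ x ∈ A}) := by
  classical
  have hxQ : x ∈ ⋂₀ {A : Set X | IsClopen A ∧ x ∈ A} := mem_sInter.2 fun Z hZ => hZ.2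
  refine ⟨⟨x, hxQ⟩, ?_⟩
  set Q := ⋂₀ {A : Set X | IsClopen A ∧ x ∈ A} with hQdef
  intro u v hu hv hQuv hQu hQv
  by_contra hcon
  rw [Set.not_nonempty_iff_eq_empty] at hcon
  have hQclosed : IsClosed Q := isClosed_sInter fun Z hZ => hZ.1.isClosed
  have hA1 : IsClosed (Q ∩ vᶜ) := hQclosed.inter hv.isClosed_compl
  have hC1 : IsClosed (Q ∩ uᶜ) := hQclosed.inter hu.isClosed_compl
  have hdisj : (Q ∩ vᶜ) ∩ (Q ∩ uᶜ) = ∅ := by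
    rw [Set.eq_empty_iff_forall_notMem]
    rintro p ⟨⟨hpQ, hpv⟩, -, hpu⟩
    rcases hQuv hpQ with h | h
    · exact hpu h
    · exact hpv h
  have hunion : (Q ∩ vᶜ) ∪ (Q ∩ uᶜ) = Q := by
    apply Set.Subset.antisymm
    · rintro p (⟨h, -⟩ | ⟨h, -⟩) <;> exact h
    · intro q hq
      by_cases hqv : q ∈ v
      · refine Or.inr ⟨hq, fun hqu => ?_⟩
        exact Set.eq_empty_iff_forall_notMem.1 hcon q ⟨hq, hqu, hqv⟩
      · exact Or.inl ⟨hq, hqv⟩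
  obtain ⟨a, haQ, hau⟩ := hQu
  obtain ⟨b, hbQ, hbv⟩ := hQv
  have haA1 : a ∈ Q ∩ vᶜ := ⟨haQ, fun hav =>
    Set.eq_empty_iff_forall_notMem.1 hcon a ⟨haQ, hau, hav⟩⟩
  have hbC1 : b ∈ Q ∩ uᶜ := ⟨hbQ, fun hbu =>
    Set.eq_empty_iff_forall_notMem.1 hcon b ⟨hbQ, hbu, hbv⟩⟩
  have hx' : x ∈ (Q ∩ vᶜ) ∪ (Q ∩ uᶜ) := by rw [hunion]; exact hxQ
  rcases hx' with hxA1 | hxC1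
  · exact SpectralQC.key hB hBc hBi x (Q ∩ vᶜ) (Q ∩ uᶜ) hA1 hC1 hdisj hunion hxA1 ⟨b, hbC1⟩
  · refine SpectralQC.key hB hBc hBi x (Q ∩ uᶜ) (Q ∩ vᶜ) hC1 hA1 ?_ ?_ hxC1 ⟨a, haA1⟩
    · rw [Set.inter_comm]; exact hdisj
    · rw [Set.union_comm]; exact hunion
end

section
/- For a commutative ring R, the map from the Boolean ring of idempotents B(R) to Clop(Spec R) sending an idempotent e to the basic open set D(e) = {p ∈ Spec R : e ∉ p} is an isomorphism of Boolean rings. -/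
/-- For a commutative ring `R`, the map `e ↦ D(e) = {p : e ∉ p}` from the Boolean ring of
idempotents of `R` to the Boolean ring of clopen subsets of `Spec R` is an isomorphism of
Boolean rings: it lands in clopens, it is bijective onto the clopens, and it transforms
the operations `e ⊕ e' = e + e' - 2ee'`, `e · e'  = ee'`, `0`, `1` into symmetric
difference, intersection, `∅` and the whole space respectively. -/
theorem idempotents_equiv_clopens_of_primeSpectrum (R : Type*) [CommRing R] :
    let D : R → Set (PrimeSpectrum R) := fun e => {p | e ∉ p.asIdeal}
    (∀ e : R, IsIdempotentElem e → IsClopen (D e)) ∧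
    (∀ e e' : R, IsIdempotentElem e → IsIdempotentElem e' → D e = D e' → e = e') ∧
    (∀ A : Set (PrimeSpectrum R), IsClopen A → ∃ e : R, IsIdempotentElem e ∧ D e = A) ∧
    (∀ e e' : R, IsIdempotentElem e → IsIdempotentElem e' →
      D (e + e' - 2 * e * e') = (D e ∪ D e') \ (D e ∩ D e')) ∧
    (∀ e e' : R, IsIdempotentElem e → IsIdempotentElem e' → D (e * e') = D e ∩ D e') ∧
    D (0 : R) = ∅ ∧ D (1 : R) = Set.univ := by
  intro D
  have hD : ∀ e : R, D e = ↑(PrimeSpectrum.basicOpen e) := fun e => rfl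
  refine ⟨?_, ?_, ?_, ?_, ?_, ?_, ?_⟩
  · intro e he
    rw [hD]
    exact PrimeSpectrum.isClopen_iff.mpr ⟨e, he, rfl⟩
  · intro e e' he he' h
    exact PrimeSpectrum.basicOpen_injOn_isIdempotentElem he he'
      (SetLike.ext' (by rw [← hD, ← hD, h]))
  · intro A hA
    obtain ⟨e, he, h⟩ := PrimeSpectrum.exists_idempotent_basicOpen_eq_of_isClopen hA
    exact ⟨e, he, by rw [hD, h]⟩
  · intro e e' he he'
    ext p
    have hp := p.isPrime
    simp only [D, Set.mem_setOf_eq, Set.mem_diff, Set.mem_union, Set.mem_inter_iff]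
    constructor
    · intro hf
      by_cases h1 : e ∈ p.asIdeal <;> by_cases h2 : e' ∈ p.asIdeal
      · exact absurd (by
          have : e + e' - 2 * e * e' ∈ p.asIdeal := by
            apply Ideal.sub_mem _ (Ideal.add_mem _ h1 h2)
            exact Ideal.mul_mem_left _ _ h2
          exact this) hf
      · exact ⟨Or.inr h2, fun h => h.1 h1⟩
      · exact ⟨Or.inl h1, fun h => h.2 h2⟩
      · exfalso
        have key : (e + e' - 2 * e * e') * e * e' = 0 := by
          linear_combination (e' - 2 * e' ^ 2) * he.eq - e * he'.eq
        have : (e + e' - 2 * e * e') * e * e' ∈ p.asIdeal := by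
          rw [key]; exact Ideal.zero_mem _
        rcases hp.mem_or_mem this with h | h
        · rcases hp.mem_or_mem h with h | h
          · exact hf h
          · exact h1 h
        · exact h2 h
    · rintro ⟨h1, h2⟩ hf
      rcases h1 with h1 | h1
      · -- e ∉ p; then e' ∉ p would contradict h2, so e' ∈ p
        have h3 : e' ∈ p.asIdeal := by
          by_contra h3; exact h2 ⟨h1, h3⟩
        apply h1
        have : e = (e + e' - 2 * e * e') + (2 * e * e' - e') := by ring
        rw [this]
        exact Ideal.add_mem _ hf (Ideal.sub_mem _ (Ideal.mul_mem_left _ _ h3) h3)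
      · have h3 : e ∈ p.asIdeal := by
          by_contra h3; exact h2 ⟨h3, h1⟩
        apply h1
        have : e' = (e + e' - 2 * e * e') + (2 * e * e' - e) := by ring
        rw [this]
        refine Ideal.add_mem _ hf (Ideal.sub_mem _ ?_ h3)
        rw [show (2:R) * e * e' = 2 * e' * e by ring]
        exact Ideal.mul_mem_left _ _ h3
  · intro e e' he he'
    ext p
    have hp := p.isPrime
    simp only [D, Set.mem_setOf_eq, Set.mem_inter_iff]
    constructor
    · intro h
      exact ⟨fun h1 => h (Ideal.mul_mem_right _ _ h1),
             fun h2 => h (Ideal.mul_mem_left _ _ h2)⟩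
    · rintro ⟨h1, h2⟩ h
      rcases hp.mem_or_mem h with h | h
      · exact h1 h
      · exact h2 h
  · ext p
    simp [D]
  · ext p
    simp only [D, Set.mem_setOf_eq, Set.mem_univ, iff_true]
    exact fun h => p.isPrime.ne_top ((Ideal.eq_top_iff_one _).mpr h)
end

section
/- Let X be a locally ringed space with R = O_X(X) its ring of global sections. The map from the Boolean ring of idempotents of R to the Boolean ring Clop(X) of clopen subsets of X, sending an idempotent s to X_s = {x ∈ X : the germ s_x is not in the maximal ideal of O_{X,x}}, is an isomorphism of Boolean rings. -/
open AlgebraicGeometry CategoryTheory Opposite TopologicalSpace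

lemma idemAux_isUnit_iff {A : Type*} [CommRing A] [IsLocalRing A] {e : A}
    (he : IsIdempotentElem e) : IsUnit e ↔ e = 1 := by
  constructor
  · intro h
    exact h.mul_left_cancel (by rw [he, mul_one])
  · rintro rfl; exact isUnit_one

lemma idemAux_not_isUnit_iff {A : Type*} [CommRing A] [IsLocalRing A] {e : A}
    (he : IsIdempotentElem e) : ¬ IsUnit e ↔ e = 0 := by
  constructor
  · intro h
    have h1 : IsUnit e ∨ IsUnit (1 - e) := by
      apply IsLocalRing.isUnit_or_isUnit_of_isUnit_add
      simpa using isUnit_one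
    have h2 : IsUnit (1 - e) := h1.resolve_left h
    have h3 : (1 - e) = 1 := (idemAux_isUnit_iff (by
      have := he; unfold IsIdempotentElem at this ⊢; linear_combination this)).mp h2
    linear_combination -h3
  · rintro rfl
    rw [isUnit_zero_iff]
    exact fun h => zero_ne_one h


/-- For a locally ringed space `X` with ring of global sections `R`, the map sending an
idempotent `s` of `R` to the set `X_s` of points where the germ of `s` is a unit is an
isomorphism from the Boolean ring of idempotents of `R` onto the Boolean ring of clopen
subsets of `X`. -/
theorem idempotents_equiv_clopens_of_locallyRingedSpace (X : LocallyRingedSpace) :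
    let R := X.presheaf.obj (op ⊤)
    let Xs : R → Set ↑X.toRingedSpace.toPresheafedSpace := fun s => (X.toRingedSpace.basicOpen s : Set _)
    (∀ s : R, IsIdempotentElem s → IsClopen (Xs s)) ∧
    (∀ s t : R, IsIdempotentElem s → IsIdempotentElem t → Xs s = Xs t → s = t) ∧
    (∀ V : Set ↑X.toRingedSpace.toPresheafedSpace, IsClopen V → ∃ s : R, IsIdempotentElem s ∧ Xs s = V) ∧
    (∀ s t : R, IsIdempotentElem s → IsIdempotentElem t →
      Xs (s + t - 2 * s * t) = (Xs s ∪ Xs t) \ (Xs s ∩ Xs t)) ∧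
    (∀ s t : R, IsIdempotentElem s → IsIdempotentElem t → Xs (s * t) = Xs s ∩ Xs t) ∧
    Xs (0 : R) = ∅ ∧ Xs (1 : R) = Set.univ := by
  intro R Xs
  -- germ as a ring-theoretic idempotent
  have germIdem : ∀ (s : R), IsIdempotentElem s → ∀ x : X,
      IsIdempotentElem (X.presheaf.Γgerm x s) := by
    intro s hs x
    unfold IsIdempotentElem at hs ⊢
    rw [← map_mul, hs]
  have memIff : ∀ (s : R) (x : X),
      x ∈ Xs s ↔ IsUnit (X.presheaf.Γgerm x s) := by
    intro s x
    exact X.toRingedSpace.mem_top_basicOpen s x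
  have memIff1 : ∀ (s : R), IsIdempotentElem s → ∀ x : X,
      (x ∈ Xs s ↔ X.presheaf.Γgerm x s = 1) := by
    intro s hs x
    rw [memIff, idemAux_isUnit_iff (germIdem s hs x)]
  have nmemIff0 : ∀ (s : R), IsIdempotentElem s → ∀ x : X,
      (x ∉ Xs s ↔ X.presheaf.Γgerm x s = 0) := by
    intro s hs x
    rw [memIff, idemAux_not_isUnit_iff (germIdem s hs x)]
  have hcompl : ∀ (s : R), IsIdempotentElem s → (Xs s)ᶜ = Xs (1 - s) := by
    intro s hs
    have hs' : IsIdempotentElem (1 - s) := hs.one_sub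
    ext x
    simp only [Set.mem_compl_iff]
    rw [nmemIff0 s hs x, memIff1 _ hs' x, map_sub, map_one]
    constructor
    · intro h; rw [h, sub_zero]
    · intro h
      have : X.presheaf.Γgerm x s = 0 := by linear_combination -h
      exact this
  -- clopen
  have hClopen : ∀ s : R, IsIdempotentElem s → IsClopen (Xs s) := by
    intro s hs
    refine ⟨?_, (X.toRingedSpace.basicOpen s).2⟩
    rw [← isOpen_compl_iff, hcompl s hs]
    exact (X.toRingedSpace.basicOpen (1 - s)).2
  -- injectivity
  have hInj : ∀ s t : R, IsIdempotentElem s → IsIdempotentElem t → Xs s = Xs t → s = t := by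
    intro s t hs ht h
    apply TopCat.Presheaf.section_ext X.sheaf ⊤ s t
    intro x _
    show X.presheaf.Γgerm x s = X.presheaf.Γgerm x t
    by_cases hx : x ∈ Xs s
    · rw [(memIff1 s hs x).mp hx, (memIff1 t ht x).mp (h ▸ hx)]
    · rw [(nmemIff0 s hs x).mp hx, (nmemIff0 t ht x).mp (h ▸ hx)]
  refine ⟨hClopen, hInj, ?_, ?_, ?_, ?_, ?_⟩
  · -- surjectivity
    intro V hV
    let Uo : Opens ↑X.toRingedSpace.toPresheafedSpace := ⟨V, hV.2⟩
    let Wo : Opens ↑X.toRingedSpace.toPresheafedSpace := ⟨Vᶜ, hV.1.isOpen_compl⟩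
    have hone : X.presheaf.map (homOfLE (inf_le_left : Uo ⊓ Wo ≤ Uo)).op 1
        = X.presheaf.map (homOfLE (inf_le_right : Uo ⊓ Wo ≤ Wo)).op 0 := by
      apply TopCat.Presheaf.section_ext X.sheaf (Uo ⊓ Wo)
      intro x hx
      exact absurd hx.1 hx.2
    let p := (⟨(1, 0), hone⟩ : RingHom.eqLocus
      (RingHom.comp (X.presheaf.map (homOfLE inf_le_left : Uo ⊓ Wo ⟶ Uo).op).hom
        (RingHom.fst (X.presheaf.obj <| op Uo) (X.presheaf.obj <| op Wo)))
      (RingHom.comp (X.presheaf.map (homOfLE inf_le_right : Uo ⊓ Wo ⟶ Wo).op).hom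
        (RingHom.snd (X.presheaf.obj <| op Uo) (X.presheaf.obj <| op Wo))))
    let s₀ := (X.sheaf.objSupIsoProdEqLocus Uo Wo).inv p
    have hsup : (⊤ : Opens ↑X.toRingedSpace.toPresheafedSpace) ≤ Uo ⊔ Wo := by
      intro x _
      show x ∈ (↑(Uo ⊔ Wo) : Set _)
      rw [Opens.coe_sup, Set.mem_union]
      by_cases hx : x ∈ V
      · exact Or.inl hx
      · exact Or.inr hx
    let s : R := X.presheaf.map (homOfLE hsup).op s₀
    have h1 : X.presheaf.map (homOfLE (le_sup_left : Uo ≤ Uo ⊔ Wo)).op s₀ = 1 :=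
      X.sheaf.objSupIsoProdEqLocus_inv_fst Uo Wo p
    have h0 : X.presheaf.map (homOfLE (le_sup_right : Wo ≤ Uo ⊔ Wo)).op s₀ = 0 :=
      X.sheaf.objSupIsoProdEqLocus_inv_snd Uo Wo p
    have hgerm : ∀ x : ↑X.toRingedSpace.toPresheafedSpace,
        (x ∈ V → X.presheaf.Γgerm x s = 1) ∧ (x ∉ V → X.presheaf.Γgerm x s = 0) := by
      intro x
      have htop : X.presheaf.Γgerm x s
          = X.presheaf.germ (Uo ⊔ Wo) x (hsup trivial) s₀ := by
        show X.presheaf.germ ⊤ x trivial (X.presheaf.map (homOfLE hsup).op s₀) = _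
        exact X.presheaf.germ_res_apply (homOfLE hsup) x trivial s₀
      constructor
      · intro hx
        have hres := X.presheaf.germ_res_apply
          (homOfLE (le_sup_left : Uo ≤ Uo ⊔ Wo)) x hx s₀
        rw [htop, ← hres, h1, map_one]
      · intro hx
        have hres := X.presheaf.germ_res_apply
          (homOfLE (le_sup_right : Wo ≤ Uo ⊔ Wo)) x hx s₀
        rw [htop, ← hres, h0, map_zero]
    have hidem : IsIdempotentElem s := by
      apply TopCat.Presheaf.section_ext X.sheaf ⊤ (s * s) s
      intro x _
      show X.presheaf.Γgerm x (s * s) = X.presheaf.Γgerm x s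
      rw [map_mul]
      by_cases hx : x ∈ V
      · rw [(hgerm x).1 hx]; ring
      · rw [(hgerm x).2 hx]; ring
    refine ⟨s, hidem, ?_⟩
    ext x
    rw [memIff s x]
    constructor
    · intro h
      by_contra hx
      rw [(hgerm x).2 hx, isUnit_zero_iff] at h
      exact zero_ne_one h
    · intro h
      rw [(hgerm x).1 h]
      exact isUnit_one
  · -- symmetric difference
    intro s t hs ht
    ext x
    have key : IsIdempotentElem (s + t - 2 * s * t) := by
      have := hs; have := ht
      unfold IsIdempotentElem at *
      linear_combination (1 + 4*t*t - 4*t) * hs + ht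
    rw [Set.mem_diff, Set.mem_union, Set.mem_inter_iff]
    constructor
    · intro h
      have h1 := (memIff1 _ key x).mp h
      rw [map_sub, map_add, map_mul, map_mul, map_ofNat] at h1
      by_cases hxs : x ∈ Xs s <;> by_cases hxt : x ∈ Xs t
      · exfalso
        rw [(memIff1 s hs x).mp hxs, (memIff1 t ht x).mp hxt] at h1
        norm_num at h1
      · exact ⟨Or.inl hxs, fun h2 => hxt h2.2⟩
      · exact ⟨Or.inr hxt, fun h2 => hxs h2.1⟩
      · exfalso
        rw [(nmemIff0 s hs x).mp hxs, (nmemIff0 t ht x).mp hxt] at h1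
        norm_num at h1
    · rintro ⟨h1, h2⟩
      rw [memIff1 _ key x, map_sub, map_add, map_mul, map_mul, map_ofNat]
      rcases h1 with hxs | hxt
      · have hxt : x ∉ Xs t := fun h => h2 ⟨hxs, h⟩
        rw [(memIff1 s hs x).mp hxs, (nmemIff0 t ht x).mp hxt]; ring
      · have hxs : x ∉ Xs s := fun h => h2 ⟨h, hxt⟩
        rw [(memIff1 t ht x).mp hxt, (nmemIff0 s hs x).mp hxs]; ring
  · -- multiplication
    intro s t _ _
    exact congrArg (SetLike.coe) (X.toRingedSpace.basicOpen_mul s t)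
  · -- zero
    ext x
    simp only [Set.mem_empty_iff_false, iff_false]
    rw [memIff]
    rw [map_zero, isUnit_zero_iff]
    exact fun h => zero_ne_one h
  · -- one
    ext x
    simp only [Set.mem_univ, iff_true]
    show x ∈ X.toRingedSpace.basicOpen (1 : R)
    rw [X.toRingedSpace.basicOpen_of_isUnit isUnit_one]
    trivial
end

section
/- Let X be a locally ringed space and R = O_X(X). Then X is connected if and only if Spec(R) is connected. -/
open AlgebraicGeometry CategoryTheory Opposite TopologicalSpace

universe u




lemma LRSaux_idem_eq_one_of_isUnit {S : Type*} [CommMonoid S] {e : S}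
    (he : IsIdempotentElem e) (hu : IsUnit e) : e = 1 :=
  hu.mul_left_cancel (by rw [he, mul_one])

lemma LRSaux_preconnectedSpace_of_clopen {α : Type*} [TopologicalSpace α]
    (h : ∀ s : Set α, IsClopen s → s = ∅ ∨ s = Set.univ) : PreconnectedSpace α := by
  constructor
  rw [isPreconnected_iff_subset_of_disjoint]
  intro u v hu hv huv hdisj
  rw [Set.univ_inter] at hdisj
  have huc : u = vᶜ := by
    apply Set.eq_of_subset_of_subset
    · exact Set.subset_compl_iff_disjoint_right.mpr (Set.disjoint_iff_inter_eq_empty.mpr hdisj)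
    · intro x hx
      rcases huv (Set.mem_univ x) with h1 | h1
      exacts [h1, absurd h1 hx]
  have hcl : IsClopen u := ⟨huc ▸ isClosed_compl_iff.mpr hv, hu⟩
  rcases h u hcl with rfl | rfl
  · right
    intro x _
    rcases huv (Set.mem_univ x) with h1 | h1
    exacts [absurd h1 (Set.notMem_empty x), h1]
  · left; exact fun x _ => Set.mem_univ x

lemma LRSaux_spec_connected_iff {S : Type*} [CommRing S] :
    ConnectedSpace (PrimeSpectrum S) ↔
      Nontrivial S ∧ ∀ e : S, IsIdempotentElem e → e = 0 ∨ e = 1 := by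
  constructor
  · intro hc
    have hnt : Nontrivial S := by
      by_contra h
      rw [not_nontrivial_iff_subsingleton] at h
      exact (inferInstance : IsEmpty (PrimeSpectrum S)).elim hc.toNonempty.some
    refine ⟨hnt, fun e he => ?_⟩
    have hcl : IsClopen (PrimeSpectrum.basicOpen e : Set (PrimeSpectrum S)) :=
      PrimeSpectrum.isClopen_iff.mpr ⟨e, he, rfl⟩
    rcases isClopen_iff.mp hcl with h0 | h1
    · left
      have hb : PrimeSpectrum.basicOpen e = ⊥ := by
        ext1; simpa using h0
      obtain ⟨n, hn⟩ := (PrimeSpectrum.basicOpen_eq_bot_iff e).mp hb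
      cases n with
      | zero =>
        have h1 : (1 : S) = 0 := by simp at hn
        rw [← mul_one e, h1, mul_zero]
      | succ n => rw [← he.pow_succ_eq n, hn]
    · right
      have hu : IsUnit e := by
        by_contra hu
        have hne : Ideal.span {e} ≠ ⊤ := fun h => hu (Ideal.span_singleton_eq_top.mp h)
        obtain ⟨m, hm, hle⟩ := Ideal.exists_le_maximal _ hne
        have hmem : (⟨m, hm.isPrime⟩ : PrimeSpectrum S) ∈
            (PrimeSpectrum.basicOpen e : Set (PrimeSpectrum S)) := h1 ▸ Set.mem_univ _
        rw [SetLike.mem_coe, PrimeSpectrum.mem_basicOpen] at hmem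
        exact hmem (hle (Ideal.subset_span rfl))
      exact LRSaux_idem_eq_one_of_isUnit he hu
  · rintro ⟨hnt, hi⟩
    have : Nonempty (PrimeSpectrum S) := inferInstance
    have : PreconnectedSpace (PrimeSpectrum S) := by
      apply LRSaux_preconnectedSpace_of_clopen
      intro s hs
      obtain ⟨e, he, rfl⟩ := PrimeSpectrum.isClopen_iff.mp hs
      rcases hi e he with rfl | rfl
      · left; simp
      · right; simp
    exact ⟨‹_›⟩

lemma LRSaux_idem_eq_one_of_isUnit' {S : Type*} [CommMonoid S] {e : S}
    (he : IsIdempotentElem e) (hu : IsUnit e) : e = 1 :=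
  hu.mul_left_cancel (by rw [he, mul_one])

lemma LRSaux_germ_zero_or_one (X : LocallyRingedSpace) {e : X.presheaf.obj (op ⊤)}
    (he : IsIdempotentElem e) (x : X.carrier) :
    X.presheaf.germ ⊤ x trivial e = 0 ∨ X.presheaf.germ ⊤ x trivial e = 1 := by
  set g := X.presheaf.germ ⊤ x trivial e with hg
  have hi : IsIdempotentElem g := by
    show g * g = g
    rw [hg, ← map_mul, he]
  rcases IsLocalRing.isUnit_or_isUnit_one_sub_self g with h | h
  · exact Or.inr (LRSaux_idem_eq_one_of_isUnit' hi h)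
  · exact Or.inl (by
      have h1 : (1 : X.presheaf.stalk x) - g = 1 :=
        LRSaux_idem_eq_one_of_isUnit' hi.one_sub h
      simpa using sub_eq_self.mp h1)

lemma LRSaux_isOpen_unit_set (X : LocallyRingedSpace) (f : X.presheaf.obj (op ⊤)) :
    IsOpen {y : X.carrier | IsUnit (X.presheaf.germ ⊤ y trivial f)} := by
  have h : {y : X.carrier | IsUnit (X.presheaf.germ ⊤ y trivial f)}
      = (X.toRingedSpace.basicOpen f).1 := by
    ext y
    exact (X.toRingedSpace.mem_basicOpen f y trivial).symm
  rw [h]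
  exact (X.toRingedSpace.basicOpen f).2


lemma LRSaux_exists_idem (X : LocallyRingedSpace.{u}) (s : Set X.carrier) (hs : IsClopen s) :
    ∃ e : X.presheaf.obj (op ⊤),
      (∀ y, y ∈ s → X.presheaf.germ ⊤ y trivial e = 1) ∧
      (∀ y, y ∉ s → X.presheaf.germ ⊤ y trivial e = 0) := by
  let U : ULift.{u} Bool → Opens X.carrier :=
    fun b => if b.down then ⟨s, hs.2⟩ else ⟨sᶜ, hs.1.isOpen_compl⟩
  let sf : ∀ i, X.presheaf.obj (op (U i)) := fun b =>
    match b with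
    | ⟨true⟩ => 1
    | ⟨false⟩ => 0
  have hcomp : TopCat.Presheaf.IsCompatible X.sheaf.1 U sf := by
    intro i j
    rcases eq_or_ne i j with rfl | hij
    · rfl
    · have hsub : Subsingleton (X.presheaf.obj (op (U i ⊓ U j))) := by
        constructor
        intro a b
        apply TopCat.Presheaf.section_ext X.sheaf
        intro y hy
        exfalso
        obtain ⟨hy1, hy2⟩ := hy
        obtain ⟨i⟩ := i
        obtain ⟨j⟩ := j
        cases i <;> cases j <;>
          first
            | exact absurd rfl hij
            | exact hy1 hy2
            | exact hy2 hy1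
      exact hsub.elim _ _
  have hcover : (⊤ : Opens X.carrier) ≤ iSup U := by
    intro y _
    by_cases hy : y ∈ s
    · exact Opens.mem_iSup.mpr ⟨⟨true⟩, hy⟩
    · exact Opens.mem_iSup.mpr ⟨⟨false⟩, hy⟩
  obtain ⟨e, hee, -⟩ := TopCat.Sheaf.existsUnique_gluing' X.sheaf U ⊤
    (fun i => homOfLE le_top) hcover sf hcomp
  refine ⟨e, ?_, ?_⟩
  · intro y hy
    have h2 := congrArg (X.sheaf.presheaf.germ (U ⟨true⟩) y hy) (hee ⟨true⟩)
    rw [TopCat.Presheaf.germ_res_apply] at h2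
    exact h2.trans (map_one _)
  · intro y hy
    have h2 := congrArg (X.sheaf.presheaf.germ (U ⟨false⟩) y hy) (hee ⟨false⟩)
    rw [TopCat.Presheaf.germ_res_apply] at h2
    exact h2.trans (map_zero _)
lemma LRSaux_X_connected_iff (X : LocallyRingedSpace.{u}) :
    ConnectedSpace X.carrier ↔
      Nontrivial (X.presheaf.obj (op ⊤)) ∧
        ∀ e : X.presheaf.obj (op ⊤), IsIdempotentElem e → e = 0 ∨ e = 1 := by
  constructor
  · intro hc
    obtain ⟨x⟩ := hc.toNonempty
    have : Nonempty ((⊤ : Opens X.carrier) : Type _) := ⟨⟨x, trivial⟩⟩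
    refine ⟨X.component_nontrivial ⊤, fun e he => ?_⟩
    have hcl : IsClopen {y : X.carrier | IsUnit (X.presheaf.germ ⊤ y trivial e)} := by
      refine ⟨?_, LRSaux_isOpen_unit_set X e⟩
      rw [← isOpen_compl_iff]
      have hcompl : {y : X.carrier | IsUnit (X.presheaf.germ ⊤ y trivial e)}ᶜ =
          {y : X.carrier | IsUnit (X.presheaf.germ ⊤ y trivial (1 - e))} := by
        ext y
        simp only [Set.mem_compl_iff, Set.mem_setOf_eq, map_sub, map_one]
        rcases LRSaux_germ_zero_or_one X he y with h0 | h1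
        · rw [h0]; simp
        · rw [h1]; simp
      rw [hcompl]
      exact LRSaux_isOpen_unit_set X (1 - e)
    rcases isClopen_iff.mp hcl with h0 | h1
    · left
      apply TopCat.Presheaf.section_ext X.sheaf ⊤
      intro y hy
      show (X.presheaf.germ ⊤ y hy) e = (X.presheaf.germ ⊤ y hy) 0
      rw [map_zero]
      rcases LRSaux_germ_zero_or_one X he y with h | h
      · exact h
      · exfalso
        have hmem : y ∈ {y : X.carrier | IsUnit (X.presheaf.germ ⊤ y trivial e)} := by
          rw [Set.mem_setOf_eq, h]; exact isUnit_one
        rw [h0] at hmem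
        exact hmem
    · right
      apply TopCat.Presheaf.section_ext X.sheaf ⊤
      intro y hy
      show (X.presheaf.germ ⊤ y hy) e = (X.presheaf.germ ⊤ y hy) 1
      rw [map_one]
      rcases LRSaux_germ_zero_or_one X he y with h | h
      · exfalso
        have hmem : y ∈ {y : X.carrier | IsUnit (X.presheaf.germ ⊤ y trivial e)} :=
          h1 ▸ Set.mem_univ _
        rw [Set.mem_setOf_eq, h] at hmem
        exact not_isUnit_zero hmem
      · exact h
  · rintro ⟨hnt, hi⟩
    have hne : Nonempty X.carrier := by
      by_contra h
      rw [not_nonempty_iff] at h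
      have h01 : (0 : X.presheaf.obj (op ⊤)) = 1 := by
        apply TopCat.Presheaf.section_ext X.sheaf ⊤
        intro y hy
        exact h.elim y
      exact zero_ne_one h01
    have hpc : PreconnectedSpace X.carrier := by
      apply LRSaux_preconnectedSpace_of_clopen
      intro s hs
      obtain ⟨e, hgerm1, hgerm0⟩ := LRSaux_exists_idem X s hs
      have heidem : IsIdempotentElem e := by
        show e * e = e
        apply TopCat.Presheaf.section_ext X.sheaf ⊤
        intro y hy
        show (X.presheaf.germ ⊤ y hy) (e * e) = (X.presheaf.germ ⊤ y hy) e
        rw [map_mul]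
        show (X.presheaf.germ ⊤ y trivial) e * (X.presheaf.germ ⊤ y trivial) e =
          (X.presheaf.germ ⊤ y trivial) e
        by_cases hys : y ∈ s
        · rw [hgerm1 y hys, mul_one]
        · rw [hgerm0 y hys, mul_zero]
      rcases hi e heidem with rfl | rfl
      · left
        ext y
        simp only [Set.mem_empty_iff_false, iff_false]
        intro hy
        have h2 := hgerm1 y hy
        rw [map_zero] at h2
        exact zero_ne_one h2
      · right
        ext y
        simp only [Set.mem_univ, iff_true]
        by_contra hy
        have h2 := hgerm0 y hy
        rw [map_one] at h2
        exact one_ne_zero h2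
    exact ⟨‹_›⟩

/-- A locally ringed space `X` is connected if and only if the prime spectrum of its ring
of global sections is connected. -/
theorem locallyRingedSpace_connected_iff_spec_connected (X : LocallyRingedSpace) :
    ConnectedSpace ↑X.toRingedSpace.toPresheafedSpace ↔
      ConnectedSpace (PrimeSpectrum (X.presheaf.obj (op ⊤))) := by
  rw [LRSaux_spec_connected_iff, ← LRSaux_X_connected_iff]
end

section
/- Let I be a proper regular ideal of a commutative ring R (i.e., a proper ideal generated by a set of idempotents). Then I is a max-regular ideal (maximal among proper regular ideals) if and only if the quotient ring R/I has no idempotents other than 0 and 1. -/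
/-- An ideal is regular if it is generated by a set of idempotent elements. -/
def IsRegularIdeal {R : Type*} [CommRing R] (I : Ideal R) : Prop :=
  ∃ S : Set R, (∀ e ∈ S, IsIdempotentElem e) ∧ I = Ideal.span S

/-- A max-regular ideal is a maximal element of the set of proper regular ideals. -/
def IsMaxRegularIdeal {R : Type*} [CommRing R] (I : Ideal R) : Prop :=
  I ≠ ⊤ ∧ IsRegularIdeal I ∧
    ∀ J : Ideal R, IsRegularIdeal J → J ≠ ⊤ → I ≤ J → I = J

/-- The ideal generated by finitely many idempotents is generated by one idempotent. -/
lemma span_finset_idem {R : Type*} [CommRing R] (t : Finset R)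
    (h : ∀ e ∈ t, IsIdempotentElem e) :
    ∃ f : R, IsIdempotentElem f ∧ Ideal.span (t : Set R) = Ideal.span {f} := by
  classical
  induction t using Finset.induction_on with
  | empty => exact ⟨0, IsIdempotentElem.zero, by simp [Ideal.span_singleton_eq_bot.mpr rfl]⟩
  | @insert e t hnot ih =>
    obtain ⟨f, hf, hspan⟩ := ih (fun x hx => h x (Finset.mem_insert_of_mem hx))
    have he : e * e = e := h e (Finset.mem_insert_self e t)
    have hff : f * f = f := hf
    refine ⟨e + f - e * f, ?_, ?_⟩
    · show (e + f - e * f) * (e + f - e * f) = e + f - e * f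
      linear_combination (1 + f * f - 2 * f) * he + (1 - e) * hff
    · rw [Finset.coe_insert, Ideal.span_insert, hspan]
      apply le_antisymm
      · apply sup_le
        · rw [Ideal.span_singleton_le_span_singleton]
          exact ⟨e, by linear_combination (f - 1) * he⟩
        · rw [Ideal.span_singleton_le_span_singleton]
          exact ⟨f, by linear_combination (e - 1) * hff⟩
      · rw [Ideal.span_le]
        intro x hx
        rcases hx with rfl
        have h1 : e ∈ Ideal.span {e} ⊔ Ideal.span {f} :=
          le_sup_left (α := Ideal R) (Ideal.subset_span rfl)
        have h2 : f - e * f ∈ Ideal.span {e} ⊔ Ideal.span {f} := by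
          refine le_sup_right (α := Ideal R) ?_
          rw [Ideal.mem_span_singleton]
          exact ⟨1 - e, by ring⟩
        rw [show e + f - e * f = e + (f - e * f) by ring]
        exact add_mem h1 h2

/-- A proper regular ideal `I` of a commutative ring `R` is max-regular if and only if
`R/I` has no idempotents other than `0` and `1`. -/
theorem isMaxRegularIdeal_iff_quotient_no_nontrivial_idempotents
    {R : Type*} [CommRing R] (I : Ideal R) (hreg : IsRegularIdeal I) (hproper : I ≠ ⊤) :
    IsMaxRegularIdeal I ↔ ∀ x : R ⧸ I, IsIdempotentElem x → x = 0 ∨ x = 1 := by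
  obtain ⟨S, hSidem, hI⟩ := hreg
  constructor
  · intro hmax x hx
    obtain ⟨a, rfl⟩ := Ideal.Quotient.mk_surjective x
    have h1 : a * a - a ∈ I := by
      rwa [← Ideal.Quotient.eq_zero_iff_mem, map_sub, map_mul, sub_eq_zero]
    rw [hI] at h1
    obtain ⟨t, htS, hmem⟩ := Submodule.mem_span_finite_of_mem_span h1
    obtain ⟨f, hf, hspan⟩ := span_finset_idem t (fun e he => hSidem e (htS he))
    have hft : f ∈ Ideal.span (t : Set R) := by
      rw [hspan]; exact Ideal.subset_span rfl
    have hfI : f ∈ I := by rw [hI]; exact Ideal.span_mono htS hft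
    have hmem' : a * a - a ∈ Ideal.span {f} := hspan ▸ hmem
    obtain ⟨r, hr⟩ := Ideal.mem_span_singleton.mp hmem'
    set b := a - a * f with hb
    have hff : f * f = f := hf
    have hbidem : IsIdempotentElem b := by
      show b * b = b
      rw [hb]
      linear_combination (1 - f) * hr + (a * a - r) * hff
    have hmk : Ideal.Quotient.mk I b = Ideal.Quotient.mk I a := by
      rw [Ideal.Quotient.eq]
      simpa [hb] using I.mul_mem_left (-a) hfI
    set J := I ⊔ Ideal.span {b} with hJ
    have hJreg : IsRegularIdeal J := by
      refine ⟨S ∪ {b}, ?_, ?_⟩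
      · rintro e (he | rfl)
        · exact hSidem e he
        · exact hbidem
      · rw [hJ, hI, Ideal.span_union]
    by_cases hJtop : J = ⊤
    · right
      have h1J : (1 : R) ∈ J := hJtop ▸ Submodule.mem_top
      obtain ⟨i, hiI, z, hz, hiz⟩ := Submodule.mem_sup.mp h1J
      obtain ⟨s, hs⟩ := Ideal.mem_span_singleton.mp hz
      have h1b : (1 : R) - b ∈ I := by
        have : (1 : R) - b = (1 - b) * i := by
          have hbb : b * b = b := hbidem
          linear_combination (b - 1) * hiz + (1 - b) * hs - s * hbb
        rw [this]
        exact I.mul_mem_left _ hiI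
      have : Ideal.Quotient.mk I b = 1 := by
        rw [← sub_eq_zero, ← map_one (Ideal.Quotient.mk I), ← map_sub,
          Ideal.Quotient.eq_zero_iff_mem]
        simpa using I.neg_mem h1b
      rw [← hmk, this]
    · left
      have hIJ : I = J := hmax.2.2 J hJreg hJtop le_sup_left
      have hbI : b ∈ I := by
        rw [hIJ]
        exact le_sup_right (α := Ideal R) (Ideal.subset_span rfl)
      rw [← hmk, Ideal.Quotient.eq_zero_iff_mem]
      exact hbI
  · intro h
    refine ⟨hproper, ⟨S, hSidem, hI⟩, ?_⟩
    rintro J ⟨T, hT, hJ⟩ hJtop hIJ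
    refine le_antisymm hIJ ?_
    rw [hJ, Ideal.span_le]
    intro e heT
    have he : e * e = e := hT e heT
    have hmk : IsIdempotentElem (Ideal.Quotient.mk I e) := by
      show _ * _ = _
      rw [← map_mul, he]
    rcases h _ hmk with h0 | h1
    · exact Ideal.Quotient.eq_zero_iff_mem.mp h0
    · exfalso
      apply hJtop
      rw [Ideal.eq_top_iff_one]
      have h1e : (1 : R) - e ∈ I := by
        rw [← Ideal.Quotient.eq_zero_iff_mem, map_sub, map_one, h1, sub_self]
      have heJ : e ∈ J := hJ ▸ Ideal.subset_span heT
      simpa using add_mem (hIJ h1e) heJ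
end

section
/- For any commutative ring R and any prime ideal P of R, the ideal P* generated by all idempotent elements contained in P is a max-regular ideal of R. -/
/-- For a prime ideal `P` of a commutative ring `R`, the ideal `P*` generated by all
idempotent elements of `P` is a max-regular ideal of `R`. -/
theorem isMaxRegularIdeal_span_idempotents_of_prime
    {R : Type*} [CommRing R] (P : Ideal R) (hP : P.IsPrime) :
    IsMaxRegularIdeal (Ideal.span {e : R | e ∈ P ∧ IsIdempotentElem e}) := by
  refine ⟨?_, ⟨_, fun e he => he.2, rfl⟩, ?_⟩
  · intro h
    have hle : Ideal.span {e : R | e ∈ P ∧ IsIdempotentElem e} ≤ P :=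
      Ideal.span_le.mpr fun e he => he.1
    rw [h] at hle
    exact hP.ne_top (top_le_iff.mp hle)
  · rintro J ⟨T, hT, rfl⟩ hJne hle
    refine le_antisymm hle (Ideal.span_le.mpr ?_)
    intro e heT
    have hid := hT e heT
    have h0 : e * (1 - e) ∈ P := by
      have : e * (1 - e) = 0 := by
        rw [mul_sub, mul_one, hid, sub_self]
      rw [this]; exact P.zero_mem
    rcases hP.mem_or_mem h0 with h | h
    · exact Ideal.subset_span ⟨h, hid⟩
    · exfalso
      apply hJne
      have h1e : (1 - e) ∈ Ideal.span T := hle (Ideal.subset_span ⟨h, hid.one_sub⟩)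
      have he' : e ∈ Ideal.span T := Ideal.subset_span heT
      have h1 : (1 : R) ∈ Ideal.span T := by
        have := Ideal.add_mem _ h1e he'
        simpa using this
      exact (Ideal.eq_top_iff_one _).mpr h1
end

section
/- For any commutative ring R, every quasi-component of Spec(R) is connected; equivalently, for every prime P, the closed set V(P*) (where P* is the ideal generated by the idempotents lying in P) is precisely the connected component of P in Spec(R). -/
open PrimeSpectrum Set

private lemma preconnectedSpace_of_trivial_clopen {X : Type*} [TopologicalSpace X]
    (h : ∀ s : Set X, IsClopen s → s = ∅ ∨ s = Set.univ) : PreconnectedSpace X := by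
  constructor
  rintro u v hu hv huv ⟨x, -, hxu⟩ ⟨y, -, hyv⟩
  by_contra hne
  rw [Set.not_nonempty_iff_eq_empty] at hne
  have hdisj : u ∩ v = ∅ := by
    ext z
    simp only [Set.mem_empty_iff_false, iff_false]
    intro hz
    exact (Set.eq_empty_iff_forall_notMem.mp hne z) ⟨Set.mem_univ z, hz⟩
  have hveq : v = uᶜ := by
    apply subset_antisymm
    · intro z hz hzu
      exact (Set.eq_empty_iff_forall_notMem.mp hdisj z) ⟨hzu, hz⟩
    · intro z hz
      rcases huv (Set.mem_univ z) with h1 | h1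
      · exact absurd h1 hz
      · exact h1
  have hclopen : IsClopen u := ⟨by rw [← isOpen_compl_iff, ← hveq]; exact hv, hu⟩
  rcases h u hclopen with h0 | h0
  · rw [h0] at hxu; exact hxu
  · have hyu : y ∈ u := h0 ▸ Set.mem_univ y
    exact (Set.eq_empty_iff_forall_notMem.mp hdisj y) ⟨hyu, hyv⟩

private lemma isIdempotentElem_prod {R : Type*} [CommRing R] (T : Finset R)
    (f : R → R) (h : ∀ t ∈ T, IsIdempotentElem (f t)) :
    IsIdempotentElem (∏ t ∈ T, f t) := by
  classical
  induction T using Finset.induction_on with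
  | empty => simpa using IsIdempotentElem.one
  | @insert a s ha ih =>
    rw [Finset.prod_insert ha]
    have h1 : IsIdempotentElem (f a) := h a (Finset.mem_insert_self a s)
    have h2 : IsIdempotentElem (∏ t ∈ s, f t) :=
      ih fun t ht => h t (Finset.mem_insert_of_mem ht)
    show (f a * _) * (f a * _) = f a * _
    rw [mul_mul_mul_comm, h1.eq, h2.eq]

/-- For any commutative ring `R`, every quasi-component of `Spec R` is connected;
equivalently, for every prime `P`, the zero locus of the ideal `P*` generated by the
idempotents lying in `P` is exactly the connected component of `P` in `Spec R`. -/
theorem primeSpectrum_quasiComponent_connected (R : Type*) [CommRing R]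
    (P : PrimeSpectrum R) :
    IsConnected (⋂₀ {A : Set (PrimeSpectrum R) | IsClopen A ∧ P ∈ A}) ∧
    PrimeSpectrum.zeroLocus
        (Ideal.span {e : R | e ∈ P.asIdeal ∧ IsIdempotentElem e} : Ideal R) =
      connectedComponent P := by
  classical
  set S : Set R := {e : R | e ∈ P.asIdeal ∧ IsIdempotentElem e} with hS
  set J : Ideal R := Ideal.span S with hJ
  have hJP : J ≤ P.asIdeal := Ideal.span_le.mpr fun e he => he.1
  -- Step 1: the zero locus of J is the quasi-component of P.
  have hQ : zeroLocus (J : Set R) = ⋂₀ {A : Set (PrimeSpectrum R) | IsClopen A ∧ P ∈ A} := by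
    apply subset_antisymm
    · rintro q hq A ⟨hA, hPA⟩
      obtain ⟨e, he, rfl⟩ := isClopen_iff_zeroLocus.mp hA
      have heP : e ∈ P.asIdeal := (mem_zeroLocus _ _).mp hPA (Set.mem_singleton e)
      have heJ : e ∈ J := Ideal.subset_span ⟨heP, he⟩
      exact (mem_zeroLocus _ _).mpr (Set.singleton_subset_iff.mpr ((mem_zeroLocus _ _).mp hq heJ))
    · intro q hq
      rw [hJ, zeroLocus_span]
      refine (mem_zeroLocus _ _).mpr fun e he => ?_
      have hclo : IsClopen (zeroLocus {e}) := isClopen_iff_zeroLocus.mpr ⟨e, he.2, rfl⟩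
      have hP : P ∈ zeroLocus {e} := (mem_zeroLocus _ _).mpr (Set.singleton_subset_iff.mpr he.1)
      exact (mem_zeroLocus _ _).mp (hq _ ⟨hclo, hP⟩) (Set.mem_singleton e)
  -- Step 2: the quotient R ⧸ J has no nontrivial idempotents.
  have hidem : ∀ x : R, IsIdempotentElem (Ideal.Quotient.mk J x) →
      Ideal.Quotient.mk J x = 0 ∨ Ideal.Quotient.mk J x = 1 := by
    intro x hx
    have hxJ : x * x - x ∈ J := by
      have h' := hx.eq
      rwa [← map_mul, ← sub_eq_zero, ← map_sub, Ideal.Quotient.eq_zero_iff_mem] at h'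
    obtain ⟨T, hTS, hxT⟩ := Submodule.mem_span_finite_of_mem_span hxJ
    set e : R := 1 - ∏ t ∈ T, (1 - t) with he_def
    have hTidem : ∀ t ∈ T, IsIdempotentElem (1 - t) := fun t ht => (hTS ht).2.one_sub
    have hprod : IsIdempotentElem (∏ t ∈ T, (1 - t)) :=
      isIdempotentElem_prod T (fun t => 1 - t) hTidem
    have he_idem : IsIdempotentElem e := hprod.one_sub
    -- e lies in span T
    have heT : e ∈ Ideal.span (T : Set R) := by
      clear_value e
      rw [he_def]
      clear he_def he_idem hprod hxT
      induction T using Finset.induction_on with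
      | empty => simpa using Ideal.zero_mem _
      | @insert a s ha ih =>
        have h1 : (1 : R) - ∏ t ∈ s, (1 - t) ∈ Ideal.span (s : Set R) := by
          apply ih
          · exact fun t ht => hTS (Finset.mem_insert_of_mem ht)
          · exact fun t ht => hTidem t (Finset.mem_insert_of_mem ht)
        have hle : Ideal.span (s : Set R) ≤ Ideal.span ((insert a s : Finset R) : Set R) :=
          Ideal.span_mono (by simp [Finset.coe_insert, Set.subset_insert])
        have ha' : a ∈ Ideal.span ((insert a s : Finset R) : Set R) :=
          Ideal.subset_span (by simp)
        have key : (1 : R) - ∏ t ∈ insert a s, (1 - t) =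
            (1 - ∏ t ∈ s, (1 - t)) + a * ∏ t ∈ s, (1 - t) := by
          rw [Finset.prod_insert ha]; ring
        rw [key]
        exact Ideal.add_mem _ (hle h1) (Ideal.mul_mem_right _ _ ha')
    -- every t ∈ T lies in span {e}
    have hT_span : Ideal.span (T : Set R) ≤ Ideal.span {e} := by
      rw [Ideal.span_le]
      intro t ht
      have h0 : t * ∏ s ∈ T, (1 - s) = 0 := by
        rw [← Finset.mul_prod_erase T (fun u => 1 - u) ht, ← mul_assoc]
        have : t * (1 - t) = 0 := by
          have := (hTS ht).2.eq
          linear_combination -this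
        rw [this, zero_mul]
      refine Ideal.mem_span_singleton'.mpr ⟨t, ?_⟩
      rw [he_def]
      linear_combination -h0
    obtain ⟨c, hc⟩ := Ideal.mem_span_singleton'.mp (hT_span hxT)
    -- the element z = x - x * e is a genuine idempotent
    set z : R := x - x * e with hz_def
    have hz : IsIdempotentElem z := by
      show z * z = z
      rw [hz_def]
      have h1 : e * e = e := he_idem.eq
      linear_combination (x * x - c) * h1 + (e - 1) * hc
    have heJ : e ∈ J := Ideal.span_le.mpr (fun t ht => Ideal.subset_span (hTS ht)) heT
    have heP : e ∈ P.asIdeal := hJP heJ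
    have hz0 : z * (1 - z) = 0 := by
      have := hz.eq; linear_combination -this
    have hzP : z ∈ P.asIdeal ∨ (1 - z) ∈ P.asIdeal := by
      apply P.2.mem_or_mem
      rw [hz0]; exact Ideal.zero_mem _
    rcases hzP with hzP | hzP
    · left
      rw [Ideal.Quotient.eq_zero_iff_mem]
      have hzJ : z ∈ J := Ideal.subset_span ⟨hzP, hz⟩
      have : x = z + x * e := by rw [hz_def]; ring
      rw [this]
      exact Ideal.add_mem _ hzJ (Ideal.mul_mem_left _ _ heJ)
    · right
      have h1zJ : (1 : R) - z ∈ J := Ideal.subset_span ⟨hzP, hz.one_sub⟩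
      have : Ideal.Quotient.mk J x = Ideal.Quotient.mk J 1 := by
        rw [Ideal.Quotient.mk_eq_mk_iff_sub_mem]
        have hx1 : x - 1 = -(1 - z) + x * e := by rw [hz_def]; ring
        rw [hx1]
        exact Ideal.add_mem _ (neg_mem h1zJ) (Ideal.mul_mem_left _ _ heJ)
      rw [this, map_one]
  -- Step 3: J is a proper ideal.
  have hJne : J ≠ ⊤ := fun h => P.2.ne_top (top_le_iff.mp (h ▸ hJP))
  haveI : Nontrivial (R ⧸ J) := Ideal.Quotient.nontrivial_iff.mpr hJne
  -- Step 4: Spec (R ⧸ J) is preconnected.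
  haveI : PreconnectedSpace (PrimeSpectrum (R ⧸ J)) := by
    apply preconnectedSpace_of_trivial_clopen
    intro s hs
    obtain ⟨q, hq, rfl⟩ := isClopen_iff_zeroLocus.mp hs
    obtain ⟨x, rfl⟩ := Ideal.Quotient.mk_surjective q
    rcases hidem x hq with h0 | h0 <;> rw [h0]
    · right
      simpa using PrimeSpectrum.zeroLocus_bot (R := R ⧸ J)
    · left
      exact PrimeSpectrum.zeroLocus_singleton_one
  -- Step 5: the zero locus of J is connected.
  have hrange : Set.range (comap (Ideal.Quotient.mk J)) = zeroLocus (J : Set R) := by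
    rw [range_comap_of_surjective _ _ Ideal.Quotient.mk_surjective, Ideal.mk_ker]
  have hpre : IsPreconnected (zeroLocus (J : Set R)) := by
    rw [← hrange]
    exact isPreconnected_range (PrimeSpectrum.continuous_comap (Ideal.Quotient.mk J))
  have hPmem : P ∈ zeroLocus (J : Set R) := (mem_zeroLocus _ _).mpr hJP
  have hconn : IsConnected (zeroLocus (J : Set R)) := ⟨⟨P, hPmem⟩, hpre⟩
  -- Step 6: conclusions.
  have hcc : zeroLocus (J : Set R) = connectedComponent P := by
    apply subset_antisymm
    · exact hpre.subset_connectedComponent hPmem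
    · rw [hQ]
      rintro y hy A ⟨hA, hPA⟩
      have h' := connectedComponent_subset_iInter_isClopen hy
      exact Set.mem_iInter.mp h' ⟨A, hA, hPA⟩
  exact ⟨hQ ▸ hconn, hcc⟩
end

section
/- If I is a max-regular ideal of a commutative ring R, then the minimal primes over I are exactly the minimal primes of R that contain I, i.e., Min(I) = Min(R) ∩ V(I). -/
/-- A regular ideal contained in a prime `p` is contained in any prime `q ≤ p`. -/
lemma regular_le_of_le {R : Type*} [CommRing R] {I p q : Ideal R}
    (hreg : IsRegularIdeal I) (hp : p.IsPrime) (hq : q.IsPrime)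
    (hqp : q ≤ p) (hIp : I ≤ p) : I ≤ q := by
  obtain ⟨S, hS, rfl⟩ := hreg
  rw [Ideal.span_le]
  intro e he
  have h0 : e * (1 - e) ∈ q := by
    have : e * (1 - e) = 0 := by
      have := hS e he
      unfold IsIdempotentElem at this
      rw [mul_sub, mul_one, this, sub_self]
    rw [this]; exact q.zero_mem
  rcases hq.mem_or_mem h0 with h | h
  · exact h
  · exfalso
    have hep : e ∈ p := hIp (Ideal.subset_span he)
    have : (1 : R) ∈ p := by
      have := p.add_mem hep (hqp h)
      simpa using this
    exact hp.ne_top (Ideal.eq_top_iff_one p |>.mpr this)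

/-- If `I` is a max-regular ideal of a commutative ring `R`, then the minimal primes over
`I` are exactly the minimal primes of `R` containing `I`: `Min(I) = Min(R) ∩ V(I)`. -/
theorem minimalPrimes_of_maxRegular {R : Type*} [CommRing R] (I : Ideal R)
    (hI : IsMaxRegularIdeal I) :
    I.minimalPrimes = minimalPrimes R ∩ {p : Ideal R | I ≤ p} := by
  obtain ⟨-, hreg, -⟩ := hI
  ext p
  constructor
  · rintro ⟨⟨hp, hIp⟩, hmin⟩
    refine ⟨⟨⟨hp, bot_le⟩, ?_⟩, hIp⟩
    rintro q ⟨hq, -⟩ hqp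
    exact hmin ⟨hq, regular_le_of_le hreg hp hq hqp hIp⟩ hqp
  · rintro ⟨⟨⟨hp, -⟩, hmin⟩, hIp⟩
    exact ⟨⟨hp, hIp⟩, fun q hq hqp => hmin ⟨hq.1, bot_le⟩ hqp⟩
end

section
/- Let e be an idempotent element of a commutative ring R. The following are equivalent: (i) e is a primitive idempotent (e ≠ 0 and any nonzero idempotent e' with ee' = e' equals e); (ii) the ideal R(1−e) is a max-regular ideal of R; (iii) D(e) is a connected component of Spec(R); (iv) D(e) is a connected subset of Spec(R). -/
/-- A primitive idempotent is a nonzero idempotent `e` such that every nonzero idempotent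
`e'` with `e * e' = e'` equals `e`. -/
def IsPrimitiveIdempotent {R : Type*} [CommRing R] (e : R) : Prop :=
  IsIdempotentElem e ∧ e ≠ 0 ∧
    ∀ e' : R, IsIdempotentElem e' → e' ≠ 0 → e * e' = e' → e = e'

section Aux

variable {R : Type*} [CommRing R]

lemma aux_idem_nilpotent_eq_zero {e : R} (he : IsIdempotentElem e)
    (h : IsNilpotent e) : e = 0 := by
  obtain ⟨n, hn⟩ := h
  calc e = e ^ (n + 1) := (he.pow_succ_eq n).symm
    _ = e ^ n * e := by rw [pow_succ]
    _ = 0 := by rw [hn, zero_mul]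

lemma aux_basicOpen_nonempty {e : R} (he : IsIdempotentElem e) (hne : e ≠ 0) :
    (PrimeSpectrum.basicOpen e : Set (PrimeSpectrum R)).Nonempty := by
  rw [Set.nonempty_iff_ne_empty]
  intro h
  exact hne (aux_idem_nilpotent_eq_zero he
    ((PrimeSpectrum.basicOpen_eq_bot_iff e).mp (TopologicalSpace.Opens.coe_eq_empty.mp h)))

lemma aux_basicOpen_subset {e f : R} (hef : e * f = f) :
    (PrimeSpectrum.basicOpen f : Set (PrimeSpectrum R)) ⊆ PrimeSpectrum.basicOpen e := by
  intro q hq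
  simp only [SetLike.mem_coe, PrimeSpectrum.mem_basicOpen] at hq ⊢
  intro hqe
  exact hq (hef ▸ Ideal.mul_mem_right f _ hqe)

lemma aux_subset_mul {e f : R} (he : IsIdempotentElem e) (hf : IsIdempotentElem f)
    (h : (PrimeSpectrum.basicOpen f : Set (PrimeSpectrum R)) ⊆ PrimeSpectrum.basicOpen e) :
    e * f = f := by
  have hn : IsNilpotent (f * (1 - e)) := by
    rw [← PrimeSpectrum.basicOpen_eq_bot_iff, ← TopologicalSpace.Opens.coe_eq_empty]
    apply Set.eq_empty_of_subset_empty
    intro q hq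
    simp only [SetLike.mem_coe, PrimeSpectrum.mem_basicOpen] at hq
    exfalso
    apply hq
    by_cases hfq : f ∈ q.asIdeal
    · exact Ideal.mul_mem_right _ _ hfq
    · have hq2 : q ∈ (PrimeSpectrum.basicOpen f : Set (PrimeSpectrum R)) := hfq
      have heq : e ∉ q.asIdeal := (PrimeSpectrum.mem_basicOpen e q).mp (h hq2)
      have h0 : e * (1 - e) ∈ q.asIdeal := by
        have : e * (1 - e) = 0 := by linear_combination -he.eq
        rw [this]; exact zero_mem _
      rcases q.isPrime.mem_or_mem h0 with h' | h'
      · exact absurd h' heq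
      · exact Ideal.mul_mem_left _ _ h'
  have hidem : IsIdempotentElem (f * (1 - e)) := by
    show f * (1 - e) * (f * (1 - e)) = f * (1 - e)
    linear_combination (1 - e) ^ 2 * hf.eq + f * he.eq
  have hz : f * (1 - e) = 0 := aux_idem_nilpotent_eq_zero hidem hn
  linear_combination -hz

end Aux

/-- For an idempotent `e` of a commutative ring `R`, the following are equivalent:
(i) `e` is a primitive idempotent; (ii) `R(1-e)` is a max-regular ideal;
(iii) `D(e)` is a connected component of `Spec R`; (iv) `D(e)` is connected. -/
theorem primitive_idempotent_tfae {R : Type*} [CommRing R] (e : R)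
    (he : IsIdempotentElem e) :
    (IsPrimitiveIdempotent e ↔ IsMaxRegularIdeal (Ideal.span {1 - e})) ∧
    (IsPrimitiveIdempotent e ↔
      ∃ p : PrimeSpectrum R, {q : PrimeSpectrum R | e ∉ q.asIdeal} = connectedComponent p) ∧
    (IsPrimitiveIdempotent e ↔ IsConnected {q : PrimeSpectrum R | e ∉ q.asIdeal}) := by
  have hset : {q : PrimeSpectrum R | e ∉ q.asIdeal}
      = (PrimeSpectrum.basicOpen e : Set (PrimeSpectrum R)) := by
    ext q; simp [PrimeSpectrum.mem_basicOpen]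
  have hclopen : IsClopen (PrimeSpectrum.basicOpen e : Set (PrimeSpectrum R)) :=
    PrimeSpectrum.isClopen_iff.mpr ⟨e, he, rfl⟩
  -- (i) ↔ (iv)
  have hiv : IsPrimitiveIdempotent e ↔
      IsConnected {q : PrimeSpectrum R | e ∉ q.asIdeal} := by
    rw [hset]
    constructor
    · rintro ⟨-, hne, hprim⟩
      refine ⟨aux_basicOpen_nonempty he hne, ?_⟩
      rw [isPreconnected_iff_subset_of_disjoint]
      intro u v hu hv hcov hdisj
      -- D(e) ∩ u is clopen
      have hC : IsClopen ((PrimeSpectrum.basicOpen e : Set (PrimeSpectrum R)) ∩ u) := by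
        constructor
        · have : (PrimeSpectrum.basicOpen e : Set (PrimeSpectrum R)) ∩ u
              = (PrimeSpectrum.basicOpen e : Set (PrimeSpectrum R)) \ v := by
            apply Set.Subset.antisymm
            · rintro x ⟨hx1, hx2⟩
              refine ⟨hx1, fun hxv => ?_⟩
              have : x ∈ (PrimeSpectrum.basicOpen e : Set (PrimeSpectrum R)) ∩ (u ∩ v) :=
                ⟨hx1, hx2, hxv⟩
              rw [hdisj] at this; exact this
            · rintro x ⟨hx1, hx2⟩
              exact ⟨hx1, (hcov hx1).resolve_right hx2⟩
          rw [this]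
          exact hclopen.1.sdiff hv
        · exact (PrimeSpectrum.basicOpen e).2.inter hu
      obtain ⟨f, hf, hfeq⟩ := PrimeSpectrum.isClopen_iff.mp hC
      have hsub : (PrimeSpectrum.basicOpen f : Set (PrimeSpectrum R))
          ⊆ PrimeSpectrum.basicOpen e := by
        rw [← hfeq]; exact Set.inter_subset_left
      have hef : e * f = f := aux_subset_mul he hf hsub
      by_cases hf0 : f = 0
      · right
        intro x hx
        have hxu : x ∉ (PrimeSpectrum.basicOpen e : Set (PrimeSpectrum R)) ∩ u := by
          rw [hfeq, hf0]
          simp [PrimeSpectrum.basicOpen_zero]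
        rcases hcov hx with h | h
        · exact absurd ⟨hx, h⟩ hxu
        · exact h
      · left
        have : e = f := hprim f hf hf0 hef
        intro x hx
        have hmem : x ∈ (PrimeSpectrum.basicOpen e : Set (PrimeSpectrum R)) ∩ u := by
          rw [hfeq, ← this]; exact hx
        exact hmem.2
    · rintro ⟨hne, hconn⟩
      have hne0 : e ≠ 0 := by
        rintro rfl
        obtain ⟨x, hx⟩ := hne
        simp [PrimeSpectrum.basicOpen_zero] at hx
      refine ⟨he, hne0, fun e' he' hne' hee' => ?_⟩
      have hde' : IsIdempotentElem (e - e') := by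
        show (e - e') * (e - e') = e - e'
        linear_combination he.eq + he'.eq - 2 * hee'
      have hsub1 : (PrimeSpectrum.basicOpen e' : Set (PrimeSpectrum R))
          ⊆ PrimeSpectrum.basicOpen e := aux_basicOpen_subset hee'
      have hsub2 : (PrimeSpectrum.basicOpen (e - e') : Set (PrimeSpectrum R))
          ⊆ PrimeSpectrum.basicOpen e := aux_basicOpen_subset (by
        linear_combination he.eq - hee')
      have hdisj : (PrimeSpectrum.basicOpen e : Set (PrimeSpectrum R)) ∩
          ((PrimeSpectrum.basicOpen e' : Set (PrimeSpectrum R)) ∩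
            (PrimeSpectrum.basicOpen (e - e') : Set (PrimeSpectrum R))) = ∅ := by
        apply Set.eq_empty_of_subset_empty
        rintro x ⟨-, hx1, hx2⟩
        simp only [SetLike.mem_coe, PrimeSpectrum.mem_basicOpen] at hx1 hx2
        have hmem : e' * (e - e') ∈ x.asIdeal := by
          have : e' * (e - e') = 0 := by linear_combination hee' - he'.eq
          rw [this]; exact zero_mem _
        rcases x.isPrime.mem_or_mem hmem with h | h
        · exact hx1 h
        · exact hx2 h
      have hcov : (PrimeSpectrum.basicOpen e : Set (PrimeSpectrum R)) ⊆
          (PrimeSpectrum.basicOpen e' : Set (PrimeSpectrum R)) ∪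
            (PrimeSpectrum.basicOpen (e - e') : Set (PrimeSpectrum R)) := by
        intro x hx
        simp only [SetLike.mem_coe, PrimeSpectrum.mem_basicOpen] at hx ⊢
        by_contra h
        simp only [Set.mem_union, SetLike.mem_coe, PrimeSpectrum.mem_basicOpen, not_or,
          not_not] at h
        exact hx (by
          have : e = e' + (e - e') := by ring
          rw [this]; exact add_mem h.1 h.2)
      rcases (isPreconnected_iff_subset_of_disjoint.mp hconn _ _
        (PrimeSpectrum.basicOpen e').2 (PrimeSpectrum.basicOpen (e - e')).2
        hcov hdisj) with h | h
      · -- D(e) ⊆ D(e') so D(e-e') = ∅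
        have hempty : (PrimeSpectrum.basicOpen (e - e') : Set (PrimeSpectrum R)) = ∅ := by
          apply Set.eq_empty_of_subset_empty
          intro x hx
          have hxe : x ∈ (PrimeSpectrum.basicOpen e : Set (PrimeSpectrum R)) := hsub2 hx
          have hmem : x ∈ (PrimeSpectrum.basicOpen e : Set (PrimeSpectrum R)) ∩
              ((PrimeSpectrum.basicOpen e' : Set (PrimeSpectrum R)) ∩
                (PrimeSpectrum.basicOpen (e - e') : Set (PrimeSpectrum R))) :=
            ⟨hxe, h hxe, hx⟩
          rw [hdisj] at hmem
          exact hmem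
        have hnil : IsNilpotent (e - e') := by
          rw [← PrimeSpectrum.basicOpen_eq_bot_iff, ← TopologicalSpace.Opens.coe_eq_empty]
          exact hempty
        have hz := aux_idem_nilpotent_eq_zero hde' hnil
        linear_combination hz
      · -- D(e) ⊆ D(e-e'), contradiction via nonempty D(e')
        exfalso
        obtain ⟨x, hx⟩ := aux_basicOpen_nonempty he' hne'
        have hxe := hsub1 hx
        have hmem : x ∈ (PrimeSpectrum.basicOpen e : Set (PrimeSpectrum R)) ∩
            ((PrimeSpectrum.basicOpen e' : Set (PrimeSpectrum R)) ∩
              (PrimeSpectrum.basicOpen (e - e') : Set (PrimeSpectrum R))) :=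
          ⟨hxe, hx, h hxe⟩
        rw [hdisj] at hmem
        exact hmem
  refine ⟨?_, ?_, hiv⟩
  · -- (i) ↔ (ii)
    constructor
    · rintro ⟨-, hne, hprim⟩
      refine ⟨?_, ⟨{1 - e}, ?_, rfl⟩, ?_⟩
      · intro h
        rw [Ideal.eq_top_iff_one] at h
        obtain ⟨r, hr⟩ := Ideal.mem_span_singleton'.mp h
        apply hne
        calc e = 1 * e := (one_mul e).symm
          _ = r * (1 - e) * e := by rw [hr]
          _ = 0 := by linear_combination (-r) * he.eq
      · intro x hx
        rw [Set.mem_singleton_iff] at hx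
        rw [hx]
        exact he.one_sub
      · rintro J ⟨S, hS, rfl⟩ hJtop hle
        refine le_antisymm hle ?_
        rw [Ideal.span_le]
        intro f hfS
        have hf := hS f hfS
        have hef : IsIdempotentElem (e * f) := by
          show e * f * (e * f) = e * f
          linear_combination f ^ 2 * he.eq + e * hf.eq
        by_cases h0 : e * f = 0
        · rw [SetLike.mem_coe, Ideal.mem_span_singleton']
          exact ⟨f, by linear_combination -h0⟩
        · exfalso
          have heef : e * (e * f) = e * f := by
            linear_combination f * he.eq
          have hfe := hprim (e * f) hef h0 heef
          apply hJtop
          rw [Ideal.eq_top_iff_one]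
          have h1 : (1 : R) = (1 - e) + e * f := by linear_combination hfe
          rw [h1]
          exact add_mem (hle (Ideal.subset_span (Set.mem_singleton _)))
            (Ideal.mul_mem_left _ e (Ideal.subset_span hfS))
    · rintro ⟨htop, -, hmax⟩
      have hne : e ≠ 0 := by
        rintro rfl
        apply htop
        rw [Ideal.eq_top_iff_one]
        exact Ideal.subset_span (by simp)
      refine ⟨he, hne, fun e' he' hne' hee' => ?_⟩
      have hde' : IsIdempotentElem (e - e') := by
        show (e - e') * (e - e') = e - e'
        linear_combination he.eq + he'.eq - 2 * hee'
      set J : Ideal R := Ideal.span {1 - e, e - e'} with hJ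
      have hreg : IsRegularIdeal J := by
        refine ⟨{1 - e, e - e'}, ?_, rfl⟩
        intro x hx
        simp only [Set.mem_insert_iff, Set.mem_singleton_iff] at hx
        rcases hx with rfl | rfl
        · exact he.one_sub
        · exact hde'
      have hJtop : J ≠ ⊤ := by
        intro h
        rw [Ideal.eq_top_iff_one, hJ, Ideal.mem_span_pair] at h
        obtain ⟨a, b, hab⟩ := h
        apply hne'
        calc e' = (a * (1 - e) + b * (e - e')) * e' := by rw [hab, one_mul]
          _ = 0 := by linear_combination (b - a) * hee' - b * he'.eq
      have hle : Ideal.span {1 - e} ≤ J := by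
        apply Ideal.span_mono
        intro x hx
        exact Set.mem_insert_iff.mpr (Or.inl (Set.mem_singleton_iff.mp hx))
      have heq := hmax J hreg hJtop hle
      have hmem : e - e' ∈ Ideal.span ({1 - e} : Set R) := by
        rw [heq]
        exact Ideal.subset_span (Set.mem_insert_iff.mpr (Or.inr rfl))
      obtain ⟨r, hr⟩ := Ideal.mem_span_singleton'.mp hmem
      have h0 : e * (e - e') = 0 := by
        calc e * (e - e') = e * (r * (1 - e)) := by rw [hr]
          _ = 0 := by linear_combination (-r) * he.eq
      linear_combination h0 + hee' - he.eq
  · -- (i) ↔ (iii)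
    rw [hiv]
    constructor
    · intro h
      obtain ⟨p, hp⟩ := h.nonempty
      refine ⟨p, Set.Subset.antisymm (h.subset_connectedComponent hp) ?_⟩
      have hcl : IsClopen {q : PrimeSpectrum R | e ∉ q.asIdeal} := by
        rw [hset]; exact hclopen
      exact hcl.connectedComponent_subset hp
    · rintro ⟨p, hp⟩
      rw [hp]
      exact isConnected_connectedComponent
end

section
/- Let X be a topological space, R = Clop(X) its Boolean ring of clopens, and f : π₀(X) → Spec(R) the map sending the connected component [x] of a point x to the prime ideal {A ∈ Clop(X) : x ∉ A}. Then: (i) f is well-defined and continuous; (ii) f is injective if and only if every quasi-component of X is connected; (iii) if X is quasi-compact, f is surjective and a closed map. -/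
open TopologicalSpace Set
open scoped symmDiff

section Aux

variable {X : Type*} [TopologicalSpace X]

private lemma clopens_mem_symmDiff {a b : Clopens X} {x : X} :
    x ∈ a ∆ b ↔ (x ∈ a ∧ x ∉ b) ∨ (x ∈ b ∧ x ∉ a) := by
  rw [symmDiff_def]
  show x ∈ ((a \ b ⊔ b \ a : Clopens X) : Set X) ↔ _
  simp [Set.mem_diff]

/-- The ideal of clopens not containing `x`. -/
private def ptIdeal (x : X) : Ideal (AsBoolRing (Clopens X)) where
  carrier := {A | x ∉ (ofBoolRing A : Clopens X)}
  zero_mem' := by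
    simp only [Set.mem_setOf_eq, ofBoolRing_zero]
    show x ∉ ((⊥ : Clopens X) : Set X)
    simp
  add_mem' := by
    intro a b ha hb
    simp only [Set.mem_setOf_eq, ofBoolRing_add] at *
    rw [clopens_mem_symmDiff]
    tauto
  smul_mem' := by
    intro c A hA
    simp only [smul_eq_mul, Set.mem_setOf_eq, ofBoolRing_mul] at *
    intro h
    exact hA h.2

private lemma mem_ptIdeal {x : X} {A : AsBoolRing (Clopens X)} :
    A ∈ ptIdeal x ↔ x ∉ (ofBoolRing A : Clopens X) := Iff.rfl

private lemma ptIdeal_isPrime (x : X) : (ptIdeal x).IsPrime := by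
  constructor
  · rw [Ideal.ne_top_iff_one]
    rw [mem_ptIdeal, ofBoolRing_one]
    show ¬ x ∉ ((⊤ : Clopens X) : Set X)
    simp
  · intro a b hab
    rw [mem_ptIdeal, ofBoolRing_mul] at hab
    have : ¬(x ∈ ofBoolRing a ∧ x ∈ ofBoolRing b) := fun h => hab h
    rw [mem_ptIdeal, mem_ptIdeal]
    tauto

private def gmap (x : X) : PrimeSpectrum (AsBoolRing (Clopens X)) :=
  ⟨ptIdeal x, ptIdeal_isPrime x⟩

private lemma gmap_eq_iff {x y : X} :
    gmap x = gmap y ↔ ∀ A : Clopens X, x ∈ A ↔ y ∈ A := by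
  constructor
  · intro h A
    have h2 := congrArg (fun p : PrimeSpectrum (AsBoolRing (Clopens X)) =>
      toBoolRing A ∈ p.asIdeal) h
    simp only [eq_iff_iff] at h2
    have h3 : (x ∉ (ofBoolRing (toBoolRing A) : Clopens X)) ↔
        (y ∉ (ofBoolRing (toBoolRing A) : Clopens X)) := h2
    rw [ofBoolRing_toBoolRing] at h3
    tauto
  · intro h
    apply PrimeSpectrum.ext
    ext A
    show x ∉ (ofBoolRing A : Clopens X) ↔ y ∉ (ofBoolRing A : Clopens X)
    exact (h (ofBoolRing A)).not

/-- Membership of a quasi-component, reformulated via `Clopens`. -/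
private lemma mem_quasi_iff {x y : X} :
    y ∈ ⋂₀ {A : Set X | IsClopen A ∧ x ∈ A} ↔ ∀ A : Clopens X, x ∈ A → y ∈ A := by
  constructor
  · intro h A hA
    exact h (A : Set X) ⟨A.isClopen, hA⟩
  · intro h S hS
    exact h ⟨S, hS.1⟩ hS.2

private lemma gmap_eq_of_mem_quasi {x y : X}
    (h : y ∈ ⋂₀ {A : Set X | IsClopen A ∧ x ∈ A}) : gmap x = gmap y := by
  rw [gmap_eq_iff]
  intro A
  constructor
  · exact mem_quasi_iff.mp h A
  · intro hy
    by_contra hx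
    have hxc : x ∈ Aᶜ := by
      show x ∈ ((Aᶜ : Clopens X) : Set X)
      simpa using hx
    have := mem_quasi_iff.mp h Aᶜ hxc
    exact this hy

private lemma t2_spec (R : Type*) [BooleanRing R] : T2Space (PrimeSpectrum R) := by
  constructor
  intro p q hpq
  have : ∃ e : R, (e ∈ p.asIdeal ∧ e ∉ q.asIdeal) ∨ (e ∈ q.asIdeal ∧ e ∉ p.asIdeal) := by
    by_contra h
    push_neg at h
    apply hpq
    apply PrimeSpectrum.ext
    ext e
    have := h e
    tauto
  obtain ⟨e, he⟩ := this
  have key : ∀ a b : PrimeSpectrum R, e ∈ a.asIdeal → e ∉ b.asIdeal →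
      ∃ u v : Set (PrimeSpectrum R), IsOpen u ∧ IsOpen v ∧ a ∈ u ∧ b ∈ v ∧ Disjoint u v := by
    intro a b hea heb
    refine ⟨PrimeSpectrum.basicOpen (1 - e), PrimeSpectrum.basicOpen e,
      (PrimeSpectrum.basicOpen _).isOpen, (PrimeSpectrum.basicOpen _).isOpen, ?_, ?_, ?_⟩
    · show (1 - e) ∉ a.asIdeal
      intro h1e
      have : (1 : R) ∈ a.asIdeal := by
        have := a.asIdeal.add_mem h1e hea
        simpa using this
      exact a.isPrime.ne_top (a.asIdeal.eq_top_iff_one.mpr this)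
    · show e ∉ b.asIdeal
      exact heb
    · rw [Set.disjoint_left]
      intro r hr1 hr2
      have hr1' : (1 - e) ∉ r.asIdeal := hr1
      have hr2' : e ∉ r.asIdeal := hr2
      have hz : (1 - e) * e ∈ r.asIdeal := by
        have : (1 - e) * e = 0 := by
          have he2 : e * e = e := BooleanRing.mul_self e
          rw [sub_mul, one_mul, he2, sub_self]
        rw [this]; exact r.asIdeal.zero_mem
      rcases r.isPrime.mem_or_mem hz with h | h
      · exact hr1' h
      · exact hr2' h
  rcases he with ⟨hep, heq⟩ | ⟨heq, hep⟩
  · exact key p q hep heq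
  · obtain ⟨u, v, hu, hv, hqu, hpv, hd⟩ := key q p heq hep
    exact ⟨v, u, hv, hu, hpv, hqu, hd.symm⟩

end Aux

/-- Let `X` be a topological space and `R = Clop(X)` its Boolean ring of clopen sets.
There is a map `f : π₀(X) → Spec R` sending the component of `x` to the prime ideal of
clopens not containing `x`; it is well defined and continuous; it is injective iff every
quasi-component of `X` is connected; and if `X` is quasi-compact it is surjective and
closed. -/
theorem pi0_to_spec_clopens (X : Type*) [TopologicalSpace X] :
    ∃ f : ConnectedComponents X → PrimeSpectrum (AsBoolRing (Clopens X)),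
      (∀ x : X, ∀ A : AsBoolRing (Clopens X),
        A ∈ (f (ConnectedComponents.mk x)).asIdeal ↔ x ∉ (ofBoolRing A : Clopens X)) ∧
      Continuous f ∧
      (Function.Injective f ↔
        ∀ x : X, IsConnected (⋂₀ {A : Set X | IsClopen A ∧ x ∈ A})) ∧
      (CompactSpace X → Function.Surjective f ∧ IsClosedMap f) := by
  -- well-definedness
  have hwd : ∀ a b : X, connectedComponent a = connectedComponent b → gmap a = gmap b := by
    intro a b hab
    apply gmap_eq_of_mem_quasi
    apply mem_quasi_iff.mpr
    intro A hA
    have hb : b ∈ connectedComponent a := by rw [hab]; exact mem_connectedComponent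
    exact A.isClopen.connectedComponent_subset hA hb
  refine ⟨Quotient.lift gmap hwd, fun x A => Iff.rfl, ?_, ?_, ?_⟩
  -- continuity
  · apply ConnectedComponents.isQuotientMap_coe.continuous_iff.mpr
    have : (Quotient.lift gmap hwd) ∘ ConnectedComponents.mk = gmap := rfl
    refine (congrArg Continuous this).mpr ?_
    apply PrimeSpectrum.isTopologicalBasis_basic_opens.continuous_iff.mpr
    rintro s ⟨A, rfl⟩
    have : gmap ⁻¹' (PrimeSpectrum.basicOpen A : Set (PrimeSpectrum _)) =
        ((ofBoolRing A : Clopens X) : Set X) := by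
      ext x
      simp only [Set.mem_preimage, SetLike.mem_coe, PrimeSpectrum.mem_basicOpen]
      show ¬ (A ∈ ptIdeal x) ↔ _
      rw [mem_ptIdeal]
      exact not_not
    rw [this]
    exact (ofBoolRing A : Clopens X).isClopen.isOpen
  -- injectivity
  · constructor
    · intro hinj x
      have hQ : ⋂₀ {A : Set X | IsClopen A ∧ x ∈ A} = connectedComponent x := by
        apply Set.Subset.antisymm
        · intro y hy
          have : gmap x = gmap y := gmap_eq_of_mem_quasi hy
          have h2 : ConnectedComponents.mk x = ConnectedComponents.mk y :=
            hinj (by exact this)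
          have h3 := ConnectedComponents.coe_eq_coe.mp h2
          rw [h3]
          exact mem_connectedComponent
        · intro y hy
          rw [mem_quasi_iff]
          intro A hA
          exact A.isClopen.connectedComponent_subset hA hy
      rw [hQ]
      exact ⟨⟨x, mem_connectedComponent⟩, isPreconnected_connectedComponent⟩
    · intro hconn a b hab
      obtain ⟨x, rfl⟩ := ConnectedComponents.surjective_coe a
      obtain ⟨y, rfl⟩ := ConnectedComponents.surjective_coe b
      have hg : gmap x = gmap y := hab
      have hy : y ∈ ⋂₀ {A : Set X | IsClopen A ∧ x ∈ A} := by
        rw [mem_quasi_iff]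
        intro A hA
        exact (gmap_eq_iff.mp hg A).mp hA
      have hx : x ∈ ⋂₀ {A : Set X | IsClopen A ∧ x ∈ A} := by
        rw [mem_quasi_iff]; intro A hA; exact hA
      have hsub : ⋂₀ {A : Set X | IsClopen A ∧ x ∈ A} ⊆ connectedComponent x :=
        (hconn x).subset_connectedComponent hx
      exact ConnectedComponents.coe_eq_coe.mpr (connectedComponent_eq (hsub hy))
  -- compact case
  · intro hcomp
    constructor
    · -- surjectivity
      intro p
      -- family of clopens not in p
      have hne : Nonempty {A : AsBoolRing (Clopens X) // A ∉ p.asIdeal} :=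
        ⟨⟨1, fun h => p.isPrime.ne_top (p.asIdeal.eq_top_iff_one.mpr h)⟩⟩
      have hmul : ∀ A B : AsBoolRing (Clopens X), A ∉ p.asIdeal → B ∉ p.asIdeal →
          A * B ∉ p.asIdeal := by
        intro A B hA hB h
        rcases p.isPrime.mem_or_mem h with h | h
        · exact hA h
        · exact hB h
      have key : (⋂ A : {A : AsBoolRing (Clopens X) // A ∉ p.asIdeal},
          ((ofBoolRing A.1 : Clopens X) : Set X)).Nonempty := by
        apply IsCompact.nonempty_iInter_of_directed_nonempty_isCompact_isClosed
        · intro A B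
          refine ⟨⟨A.1 * B.1, hmul _ _ A.2 B.2⟩, ?_, ?_⟩
          · intro y hy
            have hy' : y ∈ ((ofBoolRing A.1 ⊓ ofBoolRing B.1 : Clopens X) : Set X) := by
              rw [← ofBoolRing_mul]; exact hy
            exact hy'.1
          · intro y hy
            have hy' : y ∈ ((ofBoolRing A.1 ⊓ ofBoolRing B.1 : Clopens X) : Set X) := by
              rw [← ofBoolRing_mul]; exact hy
            exact hy'.2
        · intro A
          by_contra h
          rw [Set.not_nonempty_iff_eq_empty] at h
          apply A.2
          have : (ofBoolRing A.1 : Clopens X) = ⊥ := by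
            apply SetLike.coe_injective
            simpa using h
          have hz : A.1 = 0 := by
            have := congrArg toBoolRing this
            simpa using this
          rw [hz]; exact p.asIdeal.zero_mem
        · intro A
          exact (ofBoolRing A.1 : Clopens X).isClopen.isClosed.isCompact
        · intro A
          exact (ofBoolRing A.1 : Clopens X).isClopen.isClosed
      obtain ⟨x, hx⟩ := key
      refine ⟨ConnectedComponents.mk x, ?_⟩
      show gmap x = p
      apply PrimeSpectrum.ext
      ext A
      show x ∉ (ofBoolRing A : Clopens X) ↔ A ∈ p.asIdeal
      constructor
      · intro hA
        by_contra hAp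
        exact hA (Set.mem_iInter.mp hx ⟨A, hAp⟩)
      · intro hA hxA
        -- 1 + A ∉ p
        have h1A : (1 + A) ∉ p.asIdeal := by
          intro h
          have : (1 : AsBoolRing (Clopens X)) ∈ p.asIdeal := by
            have := p.asIdeal.add_mem h hA
            have h2 : (1 + A) + A = 1 := by
              rw [add_assoc, BooleanRing.add_self, add_zero]
            rwa [h2] at this
          exact p.isPrime.ne_top (p.asIdeal.eq_top_iff_one.mpr this)
        have hx1A := Set.mem_iInter.mp hx ⟨1 + A, h1A⟩
        have : (ofBoolRing (1 + A) : Clopens X) = ⊤ ∆ (ofBoolRing A) := by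
          rw [ofBoolRing_add, ofBoolRing_one]
        rw [this] at hx1A
        have := clopens_mem_symmDiff.mp hx1A
        rcases this with ⟨_, h2⟩ | ⟨_, h2⟩
        · exact h2 hxA
        · apply h2
          show x ∈ ((⊤ : Clopens X) : Set X)
          simp
    · -- closed map
      have : T2Space (PrimeSpectrum (AsBoolRing (Clopens X))) := t2_spec _
      intro C hC
      have himg : Quotient.lift gmap hwd '' C = gmap '' (ConnectedComponents.mk ⁻¹' C) := by
        ext p
        constructor
        · rintro ⟨c, hc, rfl⟩
          obtain ⟨x, rfl⟩ := ConnectedComponents.surjective_coe c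
          exact ⟨x, hc, rfl⟩
        · rintro ⟨x, hx, rfl⟩
          exact ⟨ConnectedComponents.mk x, hx, rfl⟩
      refine (congrArg IsClosed himg).mpr ?_
      have hclosed : IsClosed (ConnectedComponents.mk ⁻¹' C) :=
        hC.preimage ConnectedComponents.continuous_coe
      have hcpt : IsCompact (ConnectedComponents.mk ⁻¹' C) :=
        hclosed.isCompact
      have hgc : Continuous (gmap : X → PrimeSpectrum (AsBoolRing (Clopens X))) := by
        apply PrimeSpectrum.isTopologicalBasis_basic_opens.continuous_iff.mpr
        rintro s ⟨A, rfl⟩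
        have : gmap ⁻¹' (PrimeSpectrum.basicOpen A : Set (PrimeSpectrum _)) =
            ((ofBoolRing A : Clopens X) : Set X) := by
          ext x
          simp only [Set.mem_preimage, SetLike.mem_coe, PrimeSpectrum.mem_basicOpen]
          show ¬ (A ∈ ptIdeal x) ↔ _
          rw [mem_ptIdeal]
          exact not_not
        rw [this]
        exact (ofBoolRing A : Clopens X).isClopen.isOpen
      exact (hcpt.image hgc).isClosed
end

section
/- Let R be a nonzero commutative ring. Then R has finitely many idempotents if and only if there exist finitely many distinct primitive idempotents e₁, …, eₙ of R (n ≥ 1) with e₁ + ⋯ + eₙ = 1, and in that case the canonical map R → ∏_{k=1}^{n} R/(1 − e_k) is a ring isomorphism, where each quotient R/(1 − e_k) is a nonzero ring with no nontrivial idempotents. -/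
section Aux

variable {R : Type*} [CommRing R]

lemma prim_orth {e f : R} (he : IsPrimitiveIdempotent e) (hf : IsPrimitiveIdempotent f)
    (hne : e ≠ f) : e * f = 0 := by
  by_contra h
  have hp : IsIdempotentElem (e * f) := by
    unfold IsIdempotentElem
    calc e * f * (e * f) = (e * e) * (f * f) := by ring
    _ = e * f := by rw [he.1, hf.1]
  have h1 : e = e * f := he.2.2 _ hp h (by
    calc e * (e * f) = (e * e) * f := by ring
    _ = e * f := by rw [he.1])
  have h2 : f = e * f := hf.2.2 _ hp h (by
    calc f * (e * f) = e * (f * f) := by ring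
    _ = e * f := by rw [hf.1])
  exact hne (h1.trans h2.symm)

lemma mem_span_one_sub_iff {a x : R} (ha : IsIdempotentElem a) :
    x ∈ Ideal.span {1 - a} ↔ x * a = 0 := by
  rw [Ideal.mem_span_singleton']
  constructor
  · rintro ⟨r, rfl⟩
    have : a - a * a = 0 := by rw [ha]; ring
    calc r * (1 - a) * a = r * (a - a * a) := by ring
    _ = 0 := by rw [this, mul_zero]
  · intro h
    exact ⟨x, by rw [mul_sub, mul_one, h, sub_zero]⟩

lemma exists_primitive_le [Finite {e : R // IsIdempotentElem e}] {a : R}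
    (ha : IsIdempotentElem a) (h0 : a ≠ 0) :
    ∃ f, IsPrimitiveIdempotent f ∧ a * f = f := by
  have hF : Finite ↥{x : R | IsIdempotentElem x} := ‹Finite {e : R // IsIdempotentElem e}›
  have hfinset : ({x : R | IsIdempotentElem x}).Finite := Set.toFinite _
  set S : R → Set R := fun b => {f : R | IsIdempotentElem f ∧ f ≠ 0 ∧ b * f = f} with hS
  have hfin : ∀ b : R, (S b).Finite := fun b =>
    hfinset.subset (fun x hx => hx.1)
  suffices H : ∀ N : ℕ, ∀ a : R, IsIdempotentElem a → a ≠ 0 → (S a).ncard ≤ N →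
      ∃ f, IsPrimitiveIdempotent f ∧ a * f = f by
    exact H (S a).ncard a ha h0 le_rfl
  intro N
  induction N with
  | zero =>
    intro a ha h0 hcard
    exfalso
    have hmem : a ∈ S a := ⟨ha, h0, ha⟩
    have : 0 < (S a).ncard := (Set.ncard_pos (hfin a)).mpr ⟨a, hmem⟩
    omega
  | succ N ih =>
    intro a ha h0 hcard
    by_cases hprim : IsPrimitiveIdempotent a
    · exact ⟨a, hprim, ha⟩
    · have : ∃ e', IsIdempotentElem e' ∧ e' ≠ 0 ∧ a * e' = e' ∧ a ≠ e' := by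
        by_contra hc
        push_neg at hc
        exact hprim ⟨ha, h0, fun e' h1 h2 h3 => hc e' h1 h2 h3⟩
      obtain ⟨b, hb, hb0, hab, hne⟩ := this
      have hsub : S b ⊂ S a := by
        constructor
        · rintro g ⟨hg, hg0, hbg⟩
          refine ⟨hg, hg0, ?_⟩
          calc a * g = a * (b * g) := by rw [hbg]
          _ = (a * b) * g := by ring
          _ = g := by rw [hab, hbg]
        · intro hle
          have haS : a ∈ S a := ⟨ha, h0, ha⟩
          have := hle haS
          have hba : b * a = a := this.2.2
          exact hne (by rw [← hab, mul_comm, hba])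
      have hlt : (S b).ncard < (S a).ncard := Set.ncard_lt_ncard hsub (hfin a)
      obtain ⟨f, hf, hbf⟩ := ih b hb hb0 (by omega)
      refine ⟨f, hf, ?_⟩
      calc a * f = a * (b * f) := by rw [hbf]
      _ = (a * b) * f := by ring
      _ = f := by rw [hab, hbf]

variable {n : ℕ} {e : Fin n → R}

lemma orth_of (hprim : ∀ k, IsPrimitiveIdempotent (e k)) (hinj : Function.Injective e)
    {j k : Fin n} (h : j ≠ k) : e j * e k = 0 :=
  prim_orth (hprim j) (hprim k) (fun hh => h (hinj hh))

lemma mul_sum_self (hprim : ∀ k, IsPrimitiveIdempotent (e k)) (hinj : Function.Injective e)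
    (j : Fin n) : e j * ∑ k, e k = e j := by
  rw [Finset.mul_sum]
  rw [Finset.sum_eq_single j]
  · exact (hprim j).1
  · intro b _ hb
    exact orth_of hprim hinj (Ne.symm hb)
  · intro h; exact absurd (Finset.mem_univ j) h

lemma part_b (hn : 1 ≤ n) (hprim : ∀ k, IsPrimitiveIdempotent (e k))
    (hinj : Function.Injective e) (hsum : ∑ k, e k = 1) :
    Function.Bijective
        (Pi.ringHom fun k => Ideal.Quotient.mk (Ideal.span {1 - e k})) ∧
      ∀ k : Fin n, Nontrivial (R ⧸ Ideal.span {1 - e k}) ∧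
        ∀ x : R ⧸ Ideal.span {1 - e k}, IsIdempotentElem x → x = 0 ∨ x = 1 := by
  have horth : ∀ {j k : Fin n}, j ≠ k → e j * e k = 0 := fun h => orth_of hprim hinj h
  have hspan : ∀ (k : Fin n) (x : R), x ∈ Ideal.span {1 - e k} ↔ x * e k = 0 :=
    fun k x => mem_span_one_sub_iff (hprim k).1
  constructor
  · constructor
    · rw [injective_iff_map_eq_zero]
      intro x hx
      have hz : ∀ k, x * e k = 0 := by
        intro k
        have : Ideal.Quotient.mk (Ideal.span {1 - e k}) x = 0 := congrFun hx k
        rw [Ideal.Quotient.eq_zero_iff_mem, hspan] at this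
        exact this
      calc x = x * ∑ k, e k := by rw [hsum, mul_one]
      _ = ∑ k, x * e k := by rw [Finset.mul_sum]
      _ = 0 := by simp [hz]
    · intro y
      choose r hr using fun k => Ideal.Quotient.mk_surjective (y k)
      refine ⟨∑ k, r k * e k, ?_⟩
      funext j
      show Ideal.Quotient.mk _ (∑ k, r k * e k) = y j
      rw [← hr j, Ideal.Quotient.eq, hspan]
      have : (∑ k, r k * e k) * e j = r j * e j := by
        rw [Finset.sum_mul]
        rw [Finset.sum_eq_single j]
        · rw [mul_assoc, (hprim j).1]
        · intro b _ hb
          have : e b * e j = 0 := horth hb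
          calc r b * e b * e j = r b * (e b * e j) := by ring
          _ = 0 := by rw [this, mul_zero]
        · intro h; exact absurd (Finset.mem_univ j) h
      rw [sub_mul, this, sub_self]
  · intro k
    have hne : Ideal.span {1 - e k} ≠ ⊤ := by
      intro h
      have : (1 : R) ∈ Ideal.span {1 - e k} := h ▸ Submodule.mem_top
      rw [hspan, one_mul] at this
      exact (hprim k).2.1 this
    have hnt : Nontrivial (R ⧸ Ideal.span {1 - e k}) :=
      Ideal.Quotient.nontrivial_iff.mpr hne
    refine ⟨hnt, ?_⟩
    intro x hx
    obtain ⟨r, hr⟩ := Ideal.Quotient.mk_surjective x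
    have hek1 : Ideal.Quotient.mk (Ideal.span {1 - e k}) (e k) = 1 := by
      rw [← sub_eq_zero, ← map_one (Ideal.Quotient.mk (Ideal.span {1 - e k})), ← map_sub,
        Ideal.Quotient.eq_zero_iff_mem]
      have h1 : (1 - e k) ∈ Ideal.span {1 - e k} := Ideal.subset_span rfl
      have h2 := (Ideal.span {1 - e k}).neg_mem h1
      rwa [neg_sub] at h2
    have hr2 : (r * r - r) * e k = 0 := by
      rw [← hspan, ← Ideal.Quotient.eq_zero_iff_mem, map_sub, map_mul, hr]
      rw [hx]; ring
    set s := r * e k with hs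
    have hsid : IsIdempotentElem s := by
      unfold IsIdempotentElem
      have : r * r * e k = r * e k := by
        have := hr2
        linear_combination this
      calc s * s = (r * r) * (e k * e k) := by rw [hs]; ring
      _ = r * r * e k := by rw [(hprim k).1]
      _ = r * e k := this
    have hmks : Ideal.Quotient.mk (Ideal.span {1 - e k}) s = x := by
      rw [hs, map_mul, hr, hek1, mul_one]
    by_cases hs0 : s = 0
    · left; rw [← hmks, hs0, map_zero]
    · right
      have hes : e k * s = s := by
        calc e k * (r * e k) = r * (e k * e k) := by ring
        _ = r * e k := by rw [(hprim k).1]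
      have := (hprim k).2.2 s hsid hs0 hes
      rw [← hmks, ← this, hek1]

end Aux

/-- A nonzero commutative ring `R` has finitely many idempotents iff there are finitely
many distinct primitive idempotents `e₁, …, eₙ` (`n ≥ 1`) summing to `1`; in that case the
canonical map `R → ∏ₖ R/(1 - eₖ)` is an isomorphism and each `R/(1 - eₖ)` is a nonzero
ring without nontrivial idempotents. -/
theorem finite_idempotents_decomposition (R : Type*) [CommRing R] [Nontrivial R] :
    (Finite {e : R // IsIdempotentElem e} ↔
      ∃ (n : ℕ) (e : Fin n → R), 1 ≤ n ∧ (∀ k, IsPrimitiveIdempotent (e k)) ∧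
        Function.Injective e ∧ ∑ k, e k = 1) ∧
    (∀ (n : ℕ) (e : Fin n → R), 1 ≤ n → (∀ k, IsPrimitiveIdempotent (e k)) →
      Function.Injective e → ∑ k, e k = 1 →
      Function.Bijective
        (Pi.ringHom fun k => Ideal.Quotient.mk (Ideal.span {1 - e k})) ∧
      ∀ k : Fin n, Nontrivial (R ⧸ Ideal.span {1 - e k}) ∧
        ∀ x : R ⧸ Ideal.span {1 - e k}, IsIdempotentElem x → x = 0 ∨ x = 1) := by
  constructor
  · constructor
    · -- forward: finiteness gives decomposition
      intro hfin
      have hPfin : ({x : R | IsPrimitiveIdempotent x}).Finite := by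
        have hF : Finite ↥{x : R | IsIdempotentElem x} := hfin
        have h1 : ({x : R | IsIdempotentElem x}).Finite := Set.toFinite _
        exact h1.subset (fun x hx => hx.1)
      set s : Finset R := hPfin.toFinset with hsdef
      have hmem : ∀ x, x ∈ s ↔ IsPrimitiveIdempotent x := by
        intro x; rw [hsdef, Set.Finite.mem_toFinset]; rfl
      -- s is nonempty
      have hne : s.Nonempty := by
        obtain ⟨f, hf, _⟩ := exists_primitive_le (R := R)
          (IsIdempotentElem.one) (one_ne_zero)
        exact ⟨f, (hmem f).mpr hf⟩
      -- f * (sum s) = f for f ∈ s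
      have hmulsum : ∀ f ∈ s, f * ∑ x ∈ s, x = f := by
        intro f hf
        rw [Finset.mul_sum, Finset.sum_eq_single f]
        · exact ((hmem f).mp hf).1
        · intro b hb hbf
          exact prim_orth ((hmem f).mp hf) ((hmem b).mp hb) (Ne.symm hbf)
        · intro h; exact absurd hf h
      -- sum s = 1
      have hsum1 : ∑ x ∈ s, x = 1 := by
        set t := ∑ x ∈ s, x with ht
        have htid : IsIdempotentElem t := by
          unfold IsIdempotentElem
          calc t * t = ∑ x ∈ s, x * t := by rw [ht, Finset.sum_mul]
          _ = ∑ x ∈ s, x := Finset.sum_congr rfl (fun x hx => hmulsum x hx)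
          _ = t := rfl
        have h1t : IsIdempotentElem (1 - t) := by
          unfold IsIdempotentElem
          have : t * t = t := htid
          linear_combination this
        by_contra hc
        have h1t0 : (1 : R) - t ≠ 0 := fun h => hc (by linear_combination -h)
        obtain ⟨g, hg, hgle⟩ := exists_primitive_le h1t h1t0
        have hgs : g ∈ s := (hmem g).mpr hg
        have hgt : g * t = g := hmulsum g hgs
        have : g = 0 := by
          have hgle' : (1 - t) * g = g := hgle
          linear_combination - hgle' - hgt
        exact hg.2.1 this
      -- build the Fin enumeration
      refine ⟨s.card, fun k => ((s.equivFin.symm k : s) : R), ?_, ?_, ?_, ?_⟩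
      · exact Finset.card_pos.mpr hne
      · intro k
        exact (hmem _).mp (s.equivFin.symm k).2
      · intro j k h
        exact s.equivFin.symm.injective (Subtype.coe_injective h)
      · calc ∑ k, ((s.equivFin.symm k : s) : R)
            = ∑ x : s, (x : R) := Equiv.sum_comp s.equivFin.symm _
        _ = ∑ x ∈ s, x := Finset.sum_coe_sort s (fun x : R => x)
        _ = 1 := hsum1
    · -- backward: decomposition gives finiteness
      rintro ⟨n, e, hn, hprim, hinj, hsum⟩
      obtain ⟨⟨hinjφ, _⟩, _⟩ := part_b hn hprim hinj hsum
      set φ := Pi.ringHom fun k => Ideal.Quotient.mk (Ideal.span {1 - e k}) with hφ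
      have hg : Function.Injective
          (fun (f : {x : R // IsIdempotentElem x}) (k : Fin n) =>
            (Ideal.Quotient.mk (Ideal.span {1 - e k}) f.1 = 1 : Prop)) := by
        intro f f' h
        have hcomp : ∀ k, Ideal.Quotient.mk (Ideal.span {1 - e k}) f.1
            = Ideal.Quotient.mk (Ideal.span {1 - e k}) f'.1 := by
          intro k
          have hiff : (Ideal.Quotient.mk (Ideal.span {1 - e k}) f.1 = 1) ↔
              (Ideal.Quotient.mk (Ideal.span {1 - e k}) f'.1 = 1) :=
            iff_of_eq (congrFun h k)
          have hid : ∀ (g : {x : R // IsIdempotentElem x}),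
              Ideal.Quotient.mk (Ideal.span {1 - e k}) g.1 = 0 ∨
              Ideal.Quotient.mk (Ideal.span {1 - e k}) g.1 = 1 := by
            intro g
            have := (part_b hn hprim hinj hsum).2 k
            apply this.2
            unfold IsIdempotentElem
            rw [← map_mul, g.2]
          rcases hid f with h1 | h1 <;> rcases hid f' with h2 | h2 <;>
            rw [h1, h2]
          · exfalso
            haveI := (part_b hn hprim hinj hsum).2 k |>.1
            rw [h1, h2] at hiff
            exact one_ne_zero ((hiff.mpr rfl).symm)
          · exfalso
            haveI := (part_b hn hprim hinj hsum).2 k |>.1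
            rw [h1, h2] at hiff
            exact one_ne_zero ((hiff.mp rfl).symm)
        have : φ f.1 = φ f'.1 := funext hcomp
        exact Subtype.ext (hinjφ this)
      exact Finite.of_injective _ hg
  · intro n e hn hprim hinj hsum
    exact part_b hn hprim hinj hsum
end
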